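/- arXiv:2301.10484 — 8 statements merged into one kernel-verified Lean document; each statement's English description precedes it below -/
import Mathlib

section
/- Let X be a real normed space, let m ≥ 1, and for 1 ≤ i ≤ m let Y_i be real Hilbert spaces with linear subspaces Y_i^δ ⊆ Y_i. Let G_i : X → Y_i' be bounded linear maps and let X^δ ⊆ X be a linear subspace. Suppose γ_1, …, γ_m > 0 are constants such that for every i and every z ∈ X^δ one has ‖G_i z‖_{(Y_i^δ)'} ≥ γ_i ‖G_i z‖_{Y_i'}. Let Y := Y_1 × ⋯ × Y_m be the Hilbert-space product with norm ‖y‖_Y² := Σ_{i=1}^m ‖y_i‖_{Y_i}², let Y^δ := Y_1^δ × ⋯ × Y_m^δ ⊆ Y, and define G : X → Y' by (Gz)(y) := Σ_{i=1}^m (G_i z)(y_i). Then for every z ∈ X^δ, ‖Gz‖_{(Y^δ)'} ≥ (min_{1≤i≤m} γ_i) · ‖Gz‖_{Y'}, where moreover ‖Gz‖_{Y'} = (Σ_{i=1}^m ‖G_i z‖_{Y_i'}²)^{1/2}. -/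
lemma aux_ratio_le {E : Type*} [NormedAddCommGroup E] [NormedSpace ℝ E]
    (f : E →L[ℝ] ℝ) (y : E) : |f y| / ‖y‖ ≤ ‖f‖ := by
  rcases eq_or_ne y 0 with rfl | h
  · simp
  · rw [div_le_iff₀ (norm_pos_iff.mpr h), ← Real.norm_eq_abs]
    exact f.le_opNorm y

/-- Componentwise uniform inf-sup conditions imply the inf-sup condition
for the combined operator `G : X → Y'`, `(Gz)(y) = Σᵢ (Gᵢz)(yᵢ)`, on the Hilbert product
`Y = Y₁ × ⋯ × Y_m` with norm `‖y‖² = Σᵢ ‖yᵢ‖²`, with constant `min_i γᵢ`; moreover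
`‖Gz‖_{Y'} = (Σᵢ ‖Gᵢz‖²)^{1/2}`. Discretized dual norms are suprema over the
(nonzero elements of the) discrete subspaces, with the convention `sup ∅ = 0` and the
value `0` at `y = 0`. -/
theorem stmt3
    {X : Type*} [NormedAddCommGroup X] [NormedSpace ℝ X]
    {m : ℕ} (hm : 0 < m)
    (Y : Fin m → Type*) [∀ i, NormedAddCommGroup (Y i)] [∀ i, InnerProductSpace ℝ (Y i)]
    [∀ i, CompleteSpace (Y i)]
    (Yd : ∀ i, Submodule ℝ (Y i))
    (G : ∀ i, X →L[ℝ] (Y i →L[ℝ] ℝ))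
    (Xδ : Submodule ℝ X)
    (γ : Fin m → ℝ) (hγ : ∀ i, 0 < γ i)
    (hinf : ∀ i, ∀ z ∈ Xδ, γ i * ‖G i z‖ ≤ ⨆ y : Yd i, |G i z (y : Y i)| / ‖(y : Y i)‖)
    (GG : X →L[ℝ] (PiLp 2 Y →L[ℝ] ℝ))
    (hGG : ∀ (z : X) (y : PiLp 2 Y), GG z y = ∑ i, G i z (y i)) :
    ∀ z ∈ Xδ,
      ((⨅ i, γ i) * ‖GG z‖ ≤
        ⨆ y : {y : PiLp 2 Y // ∀ i, y i ∈ Yd i}, |GG z (y : PiLp 2 Y)| / ‖(y : PiLp 2 Y)‖)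
      ∧ ‖GG z‖ = Real.sqrt (∑ i, ‖G i z‖ ^ 2) := by
  intro z hz
  have := Fin.pos_iff_nonempty.mp hm
  -- Riesz representatives of the components
  set v : ∀ i, Y i := fun i => (InnerProductSpace.toDual ℝ (Y i)).symm (G i z) with hv
  have hnv : ∀ i, ‖v i‖ = ‖G i z‖ := fun i =>
    (InnerProductSpace.toDual ℝ (Y i)).symm.norm_map (G i z)
  have hGv : ∀ i (y : Y i), G i z y = inner ℝ (v i) y := fun i y =>
    (InnerProductSpace.toDual_symm_apply).symm
  set S' : ℝ := ∑ i, ‖G i z‖ ^ 2 with hS'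
  have hS'nonneg : 0 ≤ S' := Finset.sum_nonneg fun i _ => sq_nonneg _
  -- the norm identity
  have hnorm : ‖GG z‖ = Real.sqrt S' := by
    apply le_antisymm
    · apply ContinuousLinearMap.opNorm_le_bound _ (Real.sqrt_nonneg _)
      intro y
      rw [hGG, Real.norm_eq_abs]
      calc |∑ i, G i z (y i)| ≤ ∑ i, |G i z (y i)| := Finset.abs_sum_le_sum_abs _ _
        _ ≤ ∑ i, ‖G i z‖ * ‖y i‖ := Finset.sum_le_sum fun i _ => by
              rw [← Real.norm_eq_abs]; exact (G i z).le_opNorm (y i)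
        _ ≤ Real.sqrt (∑ i, ‖G i z‖ ^ 2) * Real.sqrt (∑ i, ‖y i‖ ^ 2) :=
              Real.sum_mul_le_sqrt_mul_sqrt _ _ _
        _ = Real.sqrt S' * ‖y‖ := by rw [PiLp.norm_eq_of_L2]
    · set W : PiLp 2 Y := (WithLp.equiv 2 _).symm v with hW
      have hWi : ∀ i, W i = v i := fun i => rfl
      have hWnorm : ‖W‖ = Real.sqrt S' := by
        rw [PiLp.norm_eq_of_L2]
        congr 1
        refine Finset.sum_congr rfl fun i _ => ?_
        show ‖v i‖ ^ 2 = _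
        rw [hnv]
      have hGW : GG z W = S' := by
        rw [hGG]
        refine Finset.sum_congr rfl fun i _ => ?_
        show G i z (v i) = ‖G i z‖ ^ 2
        rw [hGv, real_inner_self_eq_norm_sq, hnv]
      have hle : S' ≤ ‖GG z‖ * Real.sqrt S' := by
        calc S' = GG z W := hGW.symm
          _ ≤ |GG z W| := le_abs_self _
          _ ≤ ‖GG z‖ * ‖W‖ := by rw [← Real.norm_eq_abs]; exact (GG z).le_opNorm W
          _ = ‖GG z‖ * Real.sqrt S' := by rw [hWnorm]
      rcases eq_or_lt_of_le hS'nonneg with h0 | h0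
      · rw [← h0, Real.sqrt_zero]; exact norm_nonneg (GG z)
      · have hs : 0 < Real.sqrt S' := Real.sqrt_pos.mpr h0
        have hss : Real.sqrt S' * Real.sqrt S' = S' := Real.mul_self_sqrt hS'nonneg
        nlinarith
  refine ⟨?_, hnorm⟩
  -- discretized dual norms of the components
  set a : Fin m → ℝ := fun i => ⨆ y : Yd i, |G i z (y : Y i)| / ‖(y : Y i)‖ with ha
  have hai : ∀ i, γ i * ‖G i z‖ ≤ a i := fun i => hinf i z hz
  have hanonneg : ∀ i, 0 ≤ a i := fun i =>
    le_trans (mul_nonneg (hγ i).le (norm_nonneg _)) (hai i)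
  set S : ℝ := ∑ i, (a i) ^ 2 with hS
  have hSnonneg : 0 ≤ S := Finset.sum_nonneg fun i _ => sq_nonneg _
  -- the big sup
  set F : {y : PiLp 2 Y // ∀ i, y i ∈ Yd i} → ℝ :=
    fun y => |GG z (y : PiLp 2 Y)| / ‖(y : PiLp 2 Y)‖ with hF
  have hbddF : BddAbove (Set.range F) := by
    refine ⟨‖GG z‖, ?_⟩
    rintro _ ⟨y, rfl⟩
    exact aux_ratio_le (GG z) _
  have hsup0 : (0 : ℝ) ≤ ⨆ y, F y := by
    refine le_ciSup_of_le hbddF ⟨0, fun i => (Yd i).zero_mem⟩ ?_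
    simp [hF]
  -- infimum of the γ's
  set γ0 : ℝ := ⨅ i, γ i with hγ0
  have hγ0nonneg : 0 ≤ γ0 := le_ciInf fun i => (hγ i).le
  have hγ0le : ∀ i, γ0 ≤ γ i := fun i =>
    ciInf_le ⟨0, by rintro _ ⟨j, rfl⟩; exact (hγ j).le⟩ i
  -- step 1 : γ0 * ‖GG z‖ ≤ √S
  have step1 : γ0 * ‖GG z‖ ≤ Real.sqrt S := by
    rw [hnorm]
    have h1 : γ0 * Real.sqrt S' = Real.sqrt (γ0 ^ 2 * S') := by
      rw [Real.sqrt_mul (sq_nonneg _), Real.sqrt_sq hγ0nonneg]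
    rw [h1]
    apply Real.sqrt_le_sqrt
    have : γ0 ^ 2 * S' = ∑ i, (γ0 * ‖G i z‖) ^ 2 := by
      rw [hS', Finset.mul_sum]
      exact Finset.sum_congr rfl fun i _ => (mul_pow _ _ _).symm
    rw [this, hS]
    refine Finset.sum_le_sum fun i _ => ?_
    have h2 : γ0 * ‖G i z‖ ≤ a i :=
      le_trans (mul_le_mul_of_nonneg_right (hγ0le i) (norm_nonneg _)) (hai i)
    exact pow_le_pow_left₀ (mul_nonneg hγ0nonneg (norm_nonneg _)) h2 2
  -- step 2 : √S ≤ sup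
  have step2 : Real.sqrt S ≤ ⨆ y, F y := by
    apply le_of_forall_lt
    intro c hc
    rcases lt_or_ge c 0 with hc0 | hc0
    · exact lt_of_lt_of_le hc0 hsup0
    have hsS : 0 < Real.sqrt S := lt_of_le_of_lt hc0 hc
    have hSpos : 0 < S := Real.sqrt_pos.mp hsS
    have hss : Real.sqrt S * Real.sqrt S = S := Real.mul_self_sqrt hSnonneg
    have hsumnonneg : 0 ≤ ∑ i, a i := Finset.sum_nonneg fun i _ => hanonneg i
    set ε : ℝ := Real.sqrt S * (Real.sqrt S - c) / (2 * (∑ i, a i + 1)) with hε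
    have hεpos : 0 < ε := by
      apply div_pos (mul_pos hsS (by linarith)) (by linarith)
    have hεbound : ε * ∑ i, a i < Real.sqrt S * (Real.sqrt S - c) := by
      have h1 : ε * (2 * (∑ i, a i + 1)) = Real.sqrt S * (Real.sqrt S - c) := by
        rw [hε]; field_simp
      nlinarith
    -- choose near-maximizers
    have hw : ∀ i, ∃ w : Y i, w ∈ Yd i ∧ ‖w‖ = a i ∧ a i * (a i - ε) ≤ G i z w := by
      intro i
      rcases eq_or_lt_of_le (hanonneg i) with h0 | hpos
      · exact ⟨0, (Yd i).zero_mem, by simp [← h0], by simp [← h0]⟩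
      · set εi : ℝ := min ε (a i / 2) with hεi
        have hεipos : 0 < εi := lt_min hεpos (by linarith)
        have hlt : a i - εi < a i := by linarith
        obtain ⟨y, hy⟩ := exists_lt_of_lt_ciSup (show a i - εi < a i from hlt)
        -- hy : a i - εi < |G i z y| / ‖y‖
        have hεi2 : εi ≤ a i / 2 := min_le_right _ _
        have hεi1 : εi ≤ ε := min_le_left _ _
        have hratpos : 0 < |G i z (y : Y i)| / ‖(y : Y i)‖ := by
          refine lt_of_lt_of_le ?_ hy.le
          linarith
        have hynorm : 0 < ‖(y : Y i)‖ := by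
          by_contra h
          push_neg at h
          have : ‖(y : Y i)‖ = 0 := le_antisymm h (norm_nonneg _)
          rw [this, div_zero] at hratpos
          exact lt_irrefl 0 hratpos
        set s : ℝ := if 0 ≤ G i z (y : Y i) then 1 else -1 with hs
        have hs1 : |s| = 1 := by
          rw [hs]; split <;> simp
        have hsg : s * G i z (y : Y i) = |G i z (y : Y i)| := by
          rw [hs]
          split_ifs with h
          · rw [one_mul, abs_of_nonneg h]
          · push_neg at h
            rw [abs_of_neg h]; ring
        set cc : ℝ := a i * s / ‖(y : Y i)‖ with hcc
        refine ⟨cc • (y : Y i), Submodule.smul_mem _ _ y.2, ?_, ?_⟩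
        · rw [norm_smul, Real.norm_eq_abs, hcc, abs_div, abs_mul, hs1, abs_of_pos hpos,
            abs_of_pos hynorm, mul_one, div_mul_cancel₀ _ (ne_of_gt hynorm)]
        · have hmap : G i z (cc • (y : Y i)) = a i * (|G i z (y : Y i)| / ‖(y : Y i)‖) := by
            rw [map_smul, smul_eq_mul, hcc, ← hsg]
            field_simp
          rw [hmap]
          have : a i - ε ≤ |G i z (y : Y i)| / ‖(y : Y i)‖ := by
            refine le_trans ?_ hy.le
            linarith
          exact mul_le_mul_of_nonneg_left this hpos.le
    choose w hw1 hw2 hw3 using hw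
    set W : PiLp 2 Y := (WithLp.equiv 2 _).symm w with hW
    have hWi : ∀ i, W i = w i := fun i => rfl
    have hWnorm : ‖W‖ = Real.sqrt S := by
      rw [PiLp.norm_eq_of_L2]
      congr 1
      exact Finset.sum_congr rfl fun i _ => by rw [hWi, hw2]
    have hGW : S - ε * ∑ i, a i ≤ GG z W := by
      rw [hGG]
      calc S - ε * ∑ i, a i = ∑ i, a i * (a i - ε) := by
            rw [hS, Finset.mul_sum, ← Finset.sum_sub_distrib]
            exact Finset.sum_congr rfl fun i _ => by ring
        _ ≤ ∑ i, G i z (W i) := Finset.sum_le_sum fun i _ => by rw [hWi]; exact hw3 i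
    have h1 : c * Real.sqrt S < S - ε * ∑ i, a i := by
      have h3 : ε * ∑ i, a i < S - c * Real.sqrt S := by
        calc ε * ∑ i, a i < Real.sqrt S * (Real.sqrt S - c) := hεbound
          _ = S - c * Real.sqrt S := by rw [mul_sub, hss]; ring
      linarith
    have hFW : c < |GG z W| / ‖W‖ := by
      rw [hWnorm, lt_div_iff₀ hsS]
      calc c * Real.sqrt S < S - ε * ∑ i, a i := h1
        _ ≤ GG z W := hGW
        _ ≤ |GG z W| := le_abs_self _
    exact lt_of_lt_of_le hFW (le_ciSup hbddF ⟨W, hw1⟩)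
  exact le_trans step1 step2
end

section
/- Let X and Y be real Hilbert spaces, G : X → Y' a bounded linear map, f ∈ Y', and let X^δ ⊆ X and Y^δ ⊆ Y be closed linear subspaces. Then u^δ ∈ X^δ minimizes the functional z ↦ ½·(sup_{0 ≠ y ∈ Y^δ} |(Gz − f)(y)|/‖y‖_Y)² over X^δ if and only if it satisfies the Petrov–Galerkin equations (G u^δ − f)(R^δ G w) = 0 for all w ∈ X^δ. -/
open scoped RealInnerProductSpace

/-- Let `X`, `Y` be real Hilbert spaces, `G : X → Y'` bounded linear,
`f ∈ Y'`, and `Xδ ⊆ X`, `Yδ ⊆ Y` closed subspaces. Then `uδ ∈ Xδ` minimizes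
`z ↦ ½(sup_{0 ≠ y ∈ Yδ} |(Gz − f)(y)|/‖y‖)²` over `Xδ` iff it satisfies the
Petrov–Galerkin equations `(G uδ − f)(Rδ(Gw)) = 0` for all `w ∈ Xδ`, where `Rδ` is the
Riesz lift onto `Yδ`: `Rδ g ∈ Yδ` and `g(y) = ⟪Rδ g, y⟫` for all `y ∈ Yδ`. -/
theorem stmt5
    {X Y : Type*}
    [NormedAddCommGroup X] [InnerProductSpace ℝ X] [CompleteSpace X]
    [NormedAddCommGroup Y] [InnerProductSpace ℝ Y] [CompleteSpace Y]
    (G : X →L[ℝ] (Y →L[ℝ] ℝ)) (f : Y →L[ℝ] ℝ)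
    (Xδ : Submodule ℝ X) (hXδ : IsClosed (Xδ : Set X))
    (Yδ : Submodule ℝ Y) (hYδ : IsClosed (Yδ : Set Y))
    (Rδ : (Y →L[ℝ] ℝ) → Y)
    (hRδmem : ∀ g : Y →L[ℝ] ℝ, Rδ g ∈ Yδ)
    (hRδ : ∀ g : Y →L[ℝ] ℝ, ∀ y ∈ Yδ, g y = ⟪Rδ g, y⟫)
    (uδ : X) (huδ : uδ ∈ Xδ) :
    (∀ z ∈ Xδ,
        (1/2 : ℝ) * (⨆ y : Yδ, |(G uδ - f) (y : Y)| / ‖(y : Y)‖) ^ 2 ≤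
        (1/2 : ℝ) * (⨆ y : Yδ, |(G z - f) (y : Y)| / ‖(y : Y)‖) ^ 2) ↔
    (∀ w ∈ Xδ, (G uδ - f) (Rδ (G w)) = 0) := by
  classical
  -- uniqueness of the Riesz lift
  have huniq : ∀ r₁ ∈ Yδ, ∀ r₂ ∈ Yδ,
      (∀ y ∈ Yδ, (⟪r₁, y⟫ : ℝ) = ⟪r₂, y⟫) → r₁ = r₂ := by
    intro r₁ h₁ r₂ h₂ h
    have h0 : (⟪r₁ - r₂, r₁ - r₂⟫ : ℝ) = 0 := by
      rw [inner_sub_left, h (r₁ - r₂) (Submodule.sub_mem _ h₁ h₂)]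
      ring
    exact sub_eq_zero.mp (inner_self_eq_zero.mp h0)
  have hadd : ∀ g h : Y →L[ℝ] ℝ, Rδ (g + h) = Rδ g + Rδ h := by
    intro g h
    refine huniq _ (hRδmem _) _ (Submodule.add_mem _ (hRδmem g) (hRδmem h)) ?_
    intro y hy
    rw [← hRδ _ y hy, inner_add_left, ← hRδ g y hy, ← hRδ h y hy]
    simp
  have hsmul : ∀ (t : ℝ) (g : Y →L[ℝ] ℝ), Rδ (t • g) = t • Rδ g := by
    intro t g
    refine huniq _ (hRδmem _) _ (Submodule.smul_mem _ t (hRδmem g)) ?_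
    intro y hy
    rw [← hRδ _ y hy, real_inner_smul_left, ← hRδ g y hy]
    simp
  -- the sup equals the norm of the Riesz lift
  have hsup : ∀ g : Y →L[ℝ] ℝ,
      (⨆ y : Yδ, |g (y : Y)| / ‖(y : Y)‖) = ‖Rδ g‖ := by
    intro g
    have hbdd : ∀ y : Yδ, |g (y : Y)| / ‖(y : Y)‖ ≤ ‖Rδ g‖ := by
      intro y
      rcases eq_or_ne (y : Y) 0 with h0 | h0
      · simp [h0]
      · rw [div_le_iff₀ (norm_pos_iff.mpr h0), hRδ g y y.2]
        exact abs_real_inner_le_norm _ _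
    apply le_antisymm
    · exact ciSup_le hbdd
    · rcases eq_or_ne (Rδ g) 0 with h0 | h0
      · rw [h0, norm_zero]
        exact Real.iSup_nonneg fun y => div_nonneg (abs_nonneg _) (norm_nonneg _)
      · have hB : BddAbove (Set.range fun y : Yδ => |g (y : Y)| / ‖(y : Y)‖) :=
          ⟨‖Rδ g‖, by rintro _ ⟨y, rfl⟩; exact hbdd y⟩
        have hle := le_ciSup hB (⟨Rδ g, hRδmem g⟩ : Yδ)
        have hval : |g (Rδ g)| / ‖Rδ g‖ = ‖Rδ g‖ := by
          rw [hRδ g (Rδ g) (hRδmem g), real_inner_self_eq_norm_sq,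
            abs_of_nonneg (sq_nonneg _), sq, mul_div_assoc,
            div_self (norm_ne_zero_iff.mpr h0), mul_one]
        simpa [hval] using hle
  -- decomposition
  have hexp : ∀ z : X, Rδ (G z - f) = Rδ (G uδ - f) + Rδ (G (z - uδ)) := by
    intro z
    have h1 : G z - f = (G uδ - f) + G (z - uδ) := by
      rw [map_sub]; abel
    rw [h1, hadd]
  set a := Rδ (G uδ - f) with ha
  simp only [hsup]
  constructor
  · intro hmin w hw
    set r := Rδ (G w) with hr
    have key : ∀ t : ℝ, 0 ≤ 2 * t * ⟪a, r⟫ + t ^ 2 * ‖r‖ ^ 2 := by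
      intro t
      have hz := hmin (uδ + t • w) (Xδ.add_mem huδ (Xδ.smul_mem t hw))
      rw [hexp (uδ + t • w)] at hz
      have h2 : Rδ (G (uδ + t • w - uδ)) = t • r := by
        rw [show uδ + t • w - uδ = t • w by abel, map_smul, hsmul]
      rw [h2] at hz
      have h3 : ‖a + t • r‖ ^ 2 = ‖a‖ ^ 2 + 2 * (t * ⟪a, r⟫) + ‖t • r‖ ^ 2 := by
        have := norm_add_sq_real a (t • r)
        rw [real_inner_smul_right] at this
        linarith
      have h4 : ‖t • r‖ ^ 2 = t ^ 2 * ‖r‖ ^ 2 := by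
        rw [norm_smul, mul_pow, Real.norm_eq_abs, sq_abs]
      nlinarith [hz, h3, h4]
    have hc : (⟪a, r⟫ : ℝ) = 0 := by
      rcases eq_or_lt_of_le (sq_nonneg ‖r‖) with hd0 | hd0
      · have h1 := key (-(⟪a, r⟫ : ℝ))
        rw [← hd0] at h1
        nlinarith [sq_nonneg (⟪a, r⟫ : ℝ)]
      · have h1 := key (-(⟪a, r⟫ : ℝ) / ‖r‖ ^ 2)
        have hne : (‖r‖ ^ 2 : ℝ) ≠ 0 := ne_of_gt hd0
        field_simp at h1
        rw [le_div_iff₀ (by positivity)] at h1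
        rw [zero_mul] at h1
        have h2 : (⟪a, r⟫ : ℝ) ^ 2 * (‖r‖ ^ 2) ^ 2 = 0 :=
          le_antisymm (by nlinarith) (by positivity)
        rcases mul_eq_zero.mp h2 with h3 | h3
        · exact pow_eq_zero_iff two_ne_zero |>.mp h3
        · exact absurd (pow_eq_zero_iff two_ne_zero |>.mp h3) hne
    rw [hRδ (G uδ - f) r (hRδmem _)]
    exact hc
  · intro hpg z hz
    rw [hexp z]
    have h0 : (⟪a, Rδ (G (z - uδ))⟫ : ℝ) = 0 := by
      rw [← hRδ (G uδ - f) _ (hRδmem _)]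
      exact hpg (z - uδ) (Submodule.sub_mem _ hz huδ)
    rw [norm_add_sq_real, h0]
    nlinarith [sq_nonneg ‖Rδ (G (z - uδ))‖]
end

section
/- Let X and Y be real Hilbert spaces, G : X → Y' a bounded linear map, and let X^δ ⊆ X and Y^δ ⊆ Y be closed linear subspaces. Then for every z ∈ X^δ, sup_{0 ≠ y ∈ Y^δ} |(Gz)(y)|/‖y‖_Y = sup_{0 ≠ y ∈ Z^δ} |(Gz)(y)|/‖y‖_Y, where Z^δ := {R^δ G w : w ∈ X^δ} ⊆ Y^δ. Consequently the inf-sup constant γ^δ := inf{ ‖Gz‖_{(Y^δ)'}/‖Gz‖_{Y'} : z ∈ X^δ, Gz ≠ 0 } does not change when Y^δ is replaced by Z^δ. -/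
open scoped RealInnerProductSpace

/-- With `Rδ` the Riesz lift onto the closed subspace `Yδ` of the real
Hilbert space `Y`, for every `z ∈ Xδ` the discretized dual norm of `Gz` over `Yδ` equals
the one over `Zδ := {Rδ(Gw) : w ∈ Xδ}`; consequently the inf-sup constant
`γδ = inf{‖Gz‖_{(Yδ)'}/‖Gz‖_{Y'} : z ∈ Xδ, Gz ≠ 0}` is unchanged when `Yδ` is replaced
by `Zδ`. -/
theorem stmt6
    {X Y : Type*}
    [NormedAddCommGroup X] [InnerProductSpace ℝ X] [CompleteSpace X]
    [NormedAddCommGroup Y] [InnerProductSpace ℝ Y] [CompleteSpace Y]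
    (G : X →L[ℝ] (Y →L[ℝ] ℝ))
    (Xδ : Submodule ℝ X) (hXδ : IsClosed (Xδ : Set X))
    (Yδ : Submodule ℝ Y) (hYδ : IsClosed (Yδ : Set Y))
    (Rδ : (Y →L[ℝ] ℝ) → Y)
    (hRδmem : ∀ g : Y →L[ℝ] ℝ, Rδ g ∈ Yδ)
    (hRδ : ∀ g : Y →L[ℝ] ℝ, ∀ y ∈ Yδ, g y = ⟪Rδ g, y⟫) :
    (∀ z ∈ Xδ,
        (⨆ y : Yδ, |G z (y : Y)| / ‖(y : Y)‖) =
        ⨆ y : ((fun w => Rδ (G w)) '' (Xδ : Set X)), |G z (y : Y)| / ‖(y : Y)‖)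
    ∧ (⨅ z : {z : X // z ∈ Xδ ∧ G z ≠ 0},
          (⨆ y : Yδ, |G (z : X) (y : Y)| / ‖(y : Y)‖) / ‖G (z : X)‖) =
      (⨅ z : {z : X // z ∈ Xδ ∧ G z ≠ 0},
          (⨆ y : ((fun w => Rδ (G w)) '' (Xδ : Set X)),
            |G (z : X) (y : Y)| / ‖(y : Y)‖) / ‖G (z : X)‖) := by
  have key : ∀ z ∈ Xδ, ∀ (s : Set Y), s.Nonempty → (∀ y ∈ s, y ∈ Yδ) →
      Rδ (G z) ∈ s → (⨆ y : s, |G z (y : Y)| / ‖(y : Y)‖) = ‖Rδ (G z)‖ := by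
    intro z hz s hne hsub hv
    haveI : Nonempty s := hne.to_subtype
    set v := Rδ (G z) with hvdef
    have hub : ∀ y : s, |G z (y : Y)| / ‖(y : Y)‖ ≤ ‖v‖ := by
      intro y
      rw [hRδ (G z) (y : Y) (hsub _ y.2)]
      rcases eq_or_ne (y : Y) 0 with h0 | h0
      · simp [h0]
      · rw [div_le_iff₀ (norm_pos_iff.mpr h0)]
        exact abs_real_inner_le_norm v (y : Y)
    apply le_antisymm (ciSup_le hub)
    have hbdd : BddAbove (Set.range fun y : s => |G z (y : Y)| / ‖(y : Y)‖) :=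
      ⟨‖v‖, by rintro _ ⟨y, rfl⟩; exact hub y⟩
    have := le_ciSup hbdd (⟨v, hv⟩ : s)
    refine le_trans ?_ this
    rw [hRδ (G z) v (hRδmem _)]
    rcases eq_or_ne v 0 with h0 | h0
    · simp [h0]
    · rw [real_inner_self_eq_norm_sq, abs_of_nonneg (by positivity), pow_two,
        mul_div_assoc, div_self (norm_ne_zero_iff.mpr h0), mul_one]
  have main : ∀ z ∈ Xδ,
      (⨆ y : Yδ, |G z (y : Y)| / ‖(y : Y)‖) =
      ⨆ y : ((fun w => Rδ (G w)) '' (Xδ : Set X)), |G z (y : Y)| / ‖(y : Y)‖ := by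
    intro z hz
    have h1 := key z hz (Yδ : Set Y) ⟨0, Yδ.zero_mem⟩ (fun y hy => hy) (hRδmem _)
    have h2 := key z hz ((fun w => Rδ (G w)) '' (Xδ : Set X)) ⟨Rδ (G z), ⟨z, hz, rfl⟩⟩
      (by rintro _ ⟨w, hw, rfl⟩; exact hRδmem _) ⟨z, hz, rfl⟩
    exact h1.trans h2.symm
  exact ⟨main, iInf_congr fun z => by rw [main z z.2.1]⟩
end

section
/- Let X and Y be real Hilbert spaces, G ∈ Lis(X,Y'), and let X^δ ⊆ X and Y^δ ⊆ Y be closed linear subspaces with {0} ⊊ X^δ ⊊ X. Assume the inf-sup constant γ^δ := inf{ ‖Gz‖_{(Y^δ)'}/‖Gz‖_{Y'} : z ∈ X^δ, Gz ≠ 0 } is strictly positive. Define the norm |||x||| := ‖Gx‖_{Y'} on X, and for u ∈ X let S^δ u ∈ X^δ denote the unique minimizer over X^δ of z ↦ sup_{0 ≠ y ∈ Y^δ} |(G(z − u))(y)|/‖y‖_Y. Then inf_{u ∈ X \ X^δ} [ inf_{w ∈ X^δ} |||u − w||| / |||u − S^δ u||| ] = γ^δ. -/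
open InnerProductSpace

lemma sup_eq_proj {Y : Type*} [NormedAddCommGroup Y] [InnerProductSpace ℝ Y] [CompleteSpace Y]
    (Yδ : Submodule ℝ Y) [CompleteSpace Yδ] (f : Y →L[ℝ] ℝ) :
    (⨆ y : Yδ, |f (y : Y)| / ‖(y : Y)‖) =
      ‖(Yδ.orthogonalProjectionOnto ((toDual ℝ Y).symm f) : Y)‖ := by
  set w := ((toDual ℝ Y).symm f : Y) with hw
  set p := ((Yδ.orthogonalProjectionOnto w : Yδ) : Y) with hp
  have hfy : ∀ y : Yδ, f (y : Y) = ⟪p, (y : Y)⟫_ℝ := by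
    intro y
    have h0 : ⟪w - p, (y : Y)⟫_ℝ = 0 := Submodule.starProjection_inner_eq_zero w _ y.2
    have : f (y : Y) = ⟪w, (y : Y)⟫_ℝ := (toDual_symm_apply).symm
    rw [this]
    have := inner_sub_left (𝕜 := ℝ) w p (y : Y)
    simp only [h0] at this
    linarith [this]
  have hle : ∀ y : Yδ, |f (y : Y)| / ‖(y : Y)‖ ≤ ‖p‖ := by
    intro y
    rw [hfy y]
    rcases eq_or_ne ((y : Y)) 0 with h | h
    · simp [h, norm_nonneg]
    · rw [div_le_iff₀ (norm_pos_iff.mpr h)]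
      exact abs_real_inner_le_norm p (y : Y)
  have hne : Nonempty Yδ := ⟨0⟩
  apply le_antisymm
  · exact ciSup_le hle
  · rcases eq_or_ne p 0 with h | h
    · rw [h]
      simp only [norm_zero]
      have := le_ciSup (f := fun y : Yδ => |f (y : Y)| / ‖(y : Y)‖) ⟨‖p‖, fun r hr => by
        rcases hr with ⟨y, rfl⟩; exact hle y⟩ (0 : Yδ)
      simp only [Submodule.coe_zero, norm_zero, div_zero] at this
      linarith [this, abs_nonneg (f (0:Y))]
    · have hmem : p ∈ Yδ := (Yδ.orthogonalProjectionOnto w).2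
      have := le_ciSup (f := fun y : Yδ => |f (y : Y)| / ‖(y : Y)‖) ⟨‖p‖, fun r hr => by
        rcases hr with ⟨y, rfl⟩; exact hle y⟩ (⟨p, hmem⟩ : Yδ)
      have hval : |f p| / ‖p‖ = ‖p‖ := by
        rw [hfy ⟨p, hmem⟩]
        simp only
        rw [real_inner_self_eq_norm_sq, abs_of_nonneg (by positivity)]
        rw [pow_two]
        field_simp
      rw [hval] at this
      exact this

lemma inner_eq_zero_of_min {Y : Type*} [NormedAddCommGroup Y] [InnerProductSpace ℝ Y]
    (a b : Y) (h : ∀ t : ℝ, ‖a‖ ≤ ‖a + t • b‖) : ⟪a, b⟫_ℝ = 0 := by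
  by_contra hc
  have hb : b ≠ 0 := by
    rintro rfl; exact hc (inner_zero_right a)
  have hbn : (0:ℝ) < ‖b‖ := norm_pos_iff.mpr hb
  set c : ℝ := ⟪a, b⟫_ℝ with hcdef
  set t : ℝ := -c / ‖b‖^2 with ht
  have h1 : ‖a + t • b‖^2 = ‖a‖^2 + 2*(t*c) + t^2*‖b‖^2 := by
    rw [norm_add_sq_real, real_inner_smul_right, norm_smul]
    rw [mul_pow]
    simp only [Real.norm_eq_abs, sq_abs]
    rw [hcdef]
  have h2 : ‖a‖^2 ≤ ‖a + t • b‖^2 := by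
    have := h t
    nlinarith [norm_nonneg a]
  rw [h1] at h2
  have h3 : 2*(t*c) + t^2*‖b‖^2 = -(c^2/‖b‖^2) := by
    rw [ht]; field_simp; ring
  have h5 : (0:ℝ) ≤ 2*(t*c) + t^2*‖b‖^2 := by linarith
  rw [h3] at h5
  have h4 : (0:ℝ) < c^2/‖b‖^2 := by positivity
  linarith

lemma pythag {Y : Type*} [NormedAddCommGroup Y] [InnerProductSpace ℝ Y]
    (Yδ : Submodule ℝ Y) [CompleteSpace Yδ] (w : Y) :
    ‖w‖^2 = ‖((Yδ.orthogonalProjectionOnto w : Yδ) : Y)‖^2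
      + ‖w - ((Yδ.orthogonalProjectionOnto w : Yδ) : Y)‖^2 := by
  set p := ((Yδ.orthogonalProjectionOnto w : Yδ) : Y) with hp
  have h0 : ⟪w - p, p⟫_ℝ = 0 :=
    Submodule.starProjection_inner_eq_zero w p (SetLike.coe_mem _)
  calc ‖w‖^2 = ‖p + (w - p)‖^2 := by rw [add_sub_cancel]
    _ = ‖p‖^2 + 2*⟪p, w-p⟫_ℝ + ‖w-p‖^2 := norm_add_sq_real p (w-p)
    _ = ‖p‖^2 + ‖w-p‖^2 := by rw [real_inner_comm, h0]; ring

set_option maxHeartbeats 3000000 in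
/-- Let `X`, `Y` be real Hilbert spaces, `G ∈ Lis(X,Y')`, and
`{0} ⊊ Xδ ⊊ X`, `Yδ ⊆ Y` closed subspaces with inf-sup constant `γδ > 0`. With
`|||x||| := ‖Gx‖_{Y'}` and `Sδ u` the (unique) minimizer over `Xδ` of
`z ↦ sup_{0 ≠ y ∈ Yδ} |(G(z − u))(y)|/‖y‖`, one has
`inf_{u ∈ X \ Xδ} [inf_{w ∈ Xδ} |||u − w||| / |||u − Sδ u|||] = γδ`. -/
theorem stmt8
    {X Y : Type*}
    [NormedAddCommGroup X] [InnerProductSpace ℝ X] [CompleteSpace X]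
    [NormedAddCommGroup Y] [InnerProductSpace ℝ Y] [CompleteSpace Y]
    (G : X ≃L[ℝ] (Y →L[ℝ] ℝ))
    (Xδ : Submodule ℝ X) (hXδ : IsClosed (Xδ : Set X))
    (hXδbot : Xδ ≠ ⊥) (hXδtop : Xδ ≠ ⊤)
    (Yδ : Submodule ℝ Y) (hYδ : IsClosed (Yδ : Set Y))
    (γδ : ℝ)
    (hγδ : γδ = ⨅ z : {z : X // z ∈ Xδ ∧ G z ≠ 0},
        (⨆ y : Yδ, |G (z : X) (y : Y)| / ‖(y : Y)‖) / ‖G (z : X)‖)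
    (hγδpos : 0 < γδ)
    (Sδ : X → X)
    (hSδmem : ∀ u : X, Sδ u ∈ Xδ)
    (hSδmin : ∀ u : X, ∀ z ∈ Xδ,
        (⨆ y : Yδ, |(G (Sδ u) - G u) (y : Y)| / ‖(y : Y)‖) ≤
        (⨆ y : Yδ, |(G z - G u) (y : Y)| / ‖(y : Y)‖)) :
    (⨅ u : {u : X // u ∉ Xδ},
        (⨅ w : Xδ, ‖G (u : X) - G (w : X)‖) / ‖G (u : X) - G (Sδ (u : X))‖) = γδ := by
  haveI hYc : CompleteSpace Yδ := hYδ.completeSpace_coe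
  set φ : X ≃L[ℝ] Y := G.trans (toDual ℝ Y).symm.toContinuousLinearEquiv with hφdef
  set Q : Y → Y := fun w => ((Yδ.orthogonalProjectionOnto w : Yδ) : Y) with hQdef
  have hφ : ∀ x : X, φ x = (toDual ℝ Y).symm (G x) := fun x => rfl
  have hφnorm : ∀ x : X, ‖G x‖ = ‖φ x‖ := by
    intro x; rw [hφ x, LinearIsometryEquiv.norm_map]
  have hφsub : ∀ x x' : X, φ x - φ x' = (toDual ℝ Y).symm (G x - G x') := by
    intro x x'; rw [map_sub, hφ, hφ]
  have hGsubnorm : ∀ x x' : X, ‖G x - G x'‖ = ‖φ x - φ x'‖ := by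
    intro x x'; rw [hφsub, LinearIsometryEquiv.norm_map]
  have hQsub : ∀ a b : Y, Q (a - b) = Q a - Q b := by
    intro a b; simp [hQdef, map_sub]
  have hQsmul : ∀ (t : ℝ) (a : Y), Q (t • a) = t • Q a := by
    intro t a; simp [hQdef, map_smul]
  have hQzero : Q 0 = 0 := by simp [hQdef]
  -- translation of the sup expressions
  have hsupz : ∀ z : X, (⨆ y : Yδ, |G z (y : Y)| / ‖(y : Y)‖) = ‖Q (φ z)‖ := by
    intro z; rw [sup_eq_proj Yδ (G z), hφ]
  have hmin' : ∀ u : X, ∀ z ∈ Xδ, ‖Q (φ (Sδ u) - φ u)‖ ≤ ‖Q (φ z - φ u)‖ := by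
    intro u z hz
    have := hSδmin u z hz
    rwa [sup_eq_proj Yδ (G (Sδ u) - G u), sup_eq_proj Yδ (G z - G u),
      ← hφsub, ← hφsub] at this
  have hGinj : ∀ z : X, z ≠ 0 → G z ≠ 0 := by
    intro z hz0 h
    exact hz0 (G.injective (by simpa using h))
  have hφne : ∀ z : X, z ≠ 0 → φ z ≠ 0 := by
    intro z hz0 h
    exact hz0 (φ.injective (by simpa using h))
  -- basic γδ facts
  have hQnorm_le : ∀ w : Y, ‖Q w‖ ≤ ‖w‖ := by
    intro w
    have := pythag Yδ w
    nlinarith [norm_nonneg (Q w), norm_nonneg w, sq_nonneg (‖w - Q w‖), sq_nonneg (‖w‖ + ‖Q w‖)]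
  have hγle : ∀ z ∈ Xδ, z ≠ 0 → γδ ≤ ‖Q (φ z)‖ / ‖φ z‖ := by
    intro z hz hz0
    have hGz : G z ≠ 0 := hGinj z hz0
    have hbd : BddBelow (Set.range fun i : {z : X // z ∈ Xδ ∧ G z ≠ 0} =>
        (⨆ y : Yδ, |G (i : X) (y : Y)| / ‖(y : Y)‖) / ‖G (i : X)‖) := by
      refine ⟨0, fun r hr => ?_⟩
      rcases hr with ⟨i, rfl⟩
      have h1 : (0:ℝ) ≤ ⨆ y : Yδ, |G (i : X) (y : Y)| / ‖(y : Y)‖ := by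
        rw [hsupz]; exact norm_nonneg _
      exact div_nonneg h1 (norm_nonneg _)
    have := ciInf_le hbd (⟨z, hz, hGz⟩ : {z : X // z ∈ Xδ ∧ G z ≠ 0})
    rw [← hγδ] at this
    calc γδ ≤ (⨆ y : Yδ, |G z (y : Y)| / ‖(y : Y)‖) / ‖G z‖ := this
      _ = ‖Q (φ z)‖ / ‖φ z‖ := by rw [hsupz, hφnorm]
  have hγmul : ∀ z ∈ Xδ, γδ * ‖φ z‖ ≤ ‖Q (φ z)‖ := by
    intro z hz
    rcases eq_or_ne z 0 with rfl | hz0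
    · simp [hQzero]
    · have h1 := hγle z hz hz0
      have h2 : (0:ℝ) < ‖φ z‖ := norm_pos_iff.mpr (hφne z hz0)
      rw [le_div_iff₀ h2] at h1
      linarith
  have hγ1 : γδ ≤ 1 := by
    obtain ⟨z₀, hz₀m, hz₀⟩ := Submodule.exists_mem_ne_zero_of_ne_bot hXδbot
    have h1 := hγle z₀ hz₀m hz₀
    have h2 : (0:ℝ) < ‖φ z₀‖ := norm_pos_iff.mpr (hφne z₀ hz₀)
    have h3 := hQnorm_le (φ z₀)
    calc γδ ≤ ‖Q (φ z₀)‖ / ‖φ z₀‖ := h1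
      _ ≤ 1 := by rw [div_le_one h2]; exact h3
  -- orthogonality of the residual
  have horth : ∀ u : X, ∀ z ∈ Xδ, ⟪Q (φ u - φ (Sδ u)), Q (φ z)⟫_ℝ = 0 := by
    intro u z hz
    have key : ∀ t : ℝ, ‖Q (φ (Sδ u) - φ u)‖ ≤ ‖Q (φ (Sδ u) - φ u) + t • Q (φ z)‖ := by
      intro t
      have hmem : Sδ u + t • z ∈ Xδ := Xδ.add_mem (hSδmem u) (Xδ.smul_mem t hz)
      have := hmin' u _ hmem
      have heq : φ (Sδ u + t • z) - φ u = (φ (Sδ u) - φ u) + t • φ z := by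
        rw [map_add, map_smul]; abel
      rw [heq] at this
      have heq2 : Q ((φ (Sδ u) - φ u) + t • φ z) = Q (φ (Sδ u) - φ u) + t • Q (φ z) := by
        have : (φ (Sδ u) - φ u) + t • φ z = (φ (Sδ u) - φ u) - (-(t • φ z)) := by abel
        rw [this, hQsub]
        have : Q (-(t • φ z)) = -Q (t • φ z) := by
          have := hQsub 0 (t • φ z); simpa [hQzero] using this
        rw [this, hQsmul]; abel
      rwa [heq2] at this
    have h0 := inner_eq_zero_of_min _ _ key
    have : Q (φ u - φ (Sδ u)) = -Q (φ (Sδ u) - φ u) := by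
      have h1 := hQsub (φ u) (φ (Sδ u))
      have h2 := hQsub (φ (Sδ u)) (φ u)
      rw [h1, h2]; abel
    rw [this, inner_neg_left, h0, neg_zero]
  have hQmem : ∀ w : Y, Q w ∈ Yδ := fun w => SetLike.coe_mem _
  have hQQ : ∀ w : Y, Q (Q w) = Q w := by
    intro w
    simp only [hQdef]
    rw [Submodule.orthogonalProjectionOnto_mem_subspace_eq_self ((Yδ.orthogonalProjectionOnto) w)]
  have hinner0 : ∀ a b : Y, b ∈ Yδ → ⟪a - Q a, b⟫_ℝ = 0 := by
    intro a b hb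
    exact Submodule.starProjection_inner_eq_zero a b hb
  have hpyth : ∀ w : Y, ‖w‖^2 = ‖Q w‖^2 + ‖w - Q w‖^2 := fun w => pythag Yδ w
  clear_value φ Q
  have le_of_sq : ∀ a b : ℝ, 0 ≤ a → 0 ≤ b → a^2 ≤ b^2 → a ≤ b := by
    intro a b ha hb h
    calc a = Real.sqrt (a^2) := (Real.sqrt_sq ha).symm
      _ ≤ Real.sqrt (b^2) := Real.sqrt_le_sqrt h
      _ = b := Real.sqrt_sq hb
  have hQ'le : ∀ w : Y, ‖w - Q w‖ ≤ ‖w‖ := by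
    intro w
    have := hpyth w
    nlinarith [norm_nonneg (Q w), norm_nonneg w, sq_nonneg (‖Q w‖), sq_nonneg (‖w‖ + ‖w - Q w‖),
      norm_nonneg (w - Q w)]
  -- Direction A: key pointwise estimate
  have keyA : ∀ u : X, u ∉ Xδ → ∀ w ∈ Xδ, γδ * ‖φ u - φ (Sδ u)‖ ≤ ‖φ u - φ w‖ := by
    intro u hu w hw
    set e : Y := φ u - φ (Sδ u) with he
    set v : Y := φ (w - Sδ u) with hv
    have hvmem : w - Sδ u ∈ Xδ := Xδ.sub_mem hw (hSδmem u)
    have hev : φ u - φ w = e - v := by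
      rw [he, hv, map_sub]; abel
    have h1 : ⟪Q e, Q v⟫_ℝ = 0 := horth u (w - Sδ u) hvmem
    have hc1 : ⟪e - Q e, Q v⟫_ℝ = 0 := hinner0 e (Q v) (hQmem v)
    have hc2 : ⟪Q e, v - Q v⟫_ℝ = 0 := by
      rw [real_inner_comm]
      exact hinner0 v (Q e) (hQmem e)
    have h2 : ⟪e, v⟫_ℝ = ⟪e - Q e, v - Q v⟫_ℝ := by
      have hee : e = Q e + (e - Q e) := by abel
      have hvv : v = Q v + (v - Q v) := by abel
      calc ⟪e, v⟫_ℝ = ⟪Q e + (e - Q e), Q v + (v - Q v)⟫_ℝ := by rw [← hee, ← hvv]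
        _ = ⟪Q e, Q v⟫_ℝ + ⟪Q e, v - Q v⟫_ℝ + (⟪e - Q e, Q v⟫_ℝ + ⟪e - Q e, v - Q v⟫_ℝ) := by
            rw [inner_add_left, inner_add_right, inner_add_right]
        _ = ⟪e - Q e, v - Q v⟫_ℝ := by rw [h1, hc1, hc2]; ring
    set A : ℝ := ‖e‖ with hA
    set B : ℝ := ‖v‖ with hB
    set s : ℝ := ‖v - Q v‖ with hs
    have hsB : s ≤ B := hQ'le v
    have hAnn : 0 ≤ A := norm_nonneg _
    have hBnn : 0 ≤ B := norm_nonneg _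
    have hsnn : 0 ≤ s := norm_nonneg _
    have h3 : ⟪e, v⟫_ℝ ≤ A * s := by
      rw [h2]
      calc ⟪e - Q e, v - Q v⟫_ℝ ≤ |⟪e - Q e, v - Q v⟫_ℝ| := le_abs_self _
        _ ≤ ‖e - Q e‖ * ‖v - Q v‖ := abs_real_inner_le_norm _ _
        _ ≤ A * s := by
            apply mul_le_mul_of_nonneg_right (hQ'le e) (norm_nonneg _)
    have h4 : s^2 + (γδ*B)^2 ≤ B^2 := by
      have hp := hpyth v
      have hm := hγmul (w - Sδ u) hvmem
      rw [← hv] at hm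
      nlinarith [norm_nonneg (Q v), mul_nonneg hγδpos.le (norm_nonneg v)]
    have hns : ‖e - v‖^2 = A^2 - 2*⟪e, v⟫_ℝ + B^2 := by
      rw [norm_sub_sq_real]
    clear_value s
    clear_value A B
    clear_value e v
    have hT : (γδ*A)^2 ≤ A^2 - 2*(A*s) + B^2 := by
      rcases eq_or_lt_of_le hBnn with hB0 | hB0
      · have hs0 : s = 0 := le_antisymm (by linarith) hsnn
        rw [hs0]
        have hg2 : γδ^2 ≤ 1 := by nlinarith
        nlinarith [mul_le_mul_of_nonneg_right hg2 (sq_nonneg A), sq_nonneg B]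
      · have key0 : B^2*(A^2 - 2*(A*s) + B^2 - (γδ*A)^2)
            = (s*A - B^2)^2 + A^2*((B^2 - (γδ*B)^2) - s^2) := by ring
        have h5 : (0:ℝ) ≤ (s*A - B^2)^2 + A^2*((B^2 - (γδ*B)^2) - s^2) :=
          add_nonneg (sq_nonneg _) (mul_nonneg (sq_nonneg _) (by linarith))
        have h6 : (0:ℝ) ≤ B^2*(A^2 - 2*(A*s) + B^2 - (γδ*A)^2) := by
          rw [key0]; exact h5
        have hB2 : (0:ℝ) < B^2 := by positivity
        nlinarith [h6]
    have hsq : (γδ*A)^2 ≤ ‖e - v‖^2 := by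
      rw [hns]
      linarith
    rw [hev]
    exact le_of_sq _ _ (mul_nonneg hγδpos.le hAnn) (norm_nonneg _) hsq
  -- nonemptiness of the index types
  obtain ⟨u₀, hu₀⟩ : ∃ u : X, u ∉ Xδ := by
    by_contra h
    push_neg at h
    exact hXδtop (Submodule.eq_top_iff'.mpr h)
  haveI hne_u : Nonempty {u : X // u ∉ Xδ} := ⟨⟨u₀, hu₀⟩⟩
  haveI hne_w : Nonempty Xδ := ⟨0⟩
  -- denominators are positive
  have hden : ∀ u : X, u ∉ Xδ → 0 < ‖G u - G (Sδ u)‖ := by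
    intro u hu
    rw [hGsubnorm]
    apply norm_pos_iff.mpr
    intro h
    have : u = Sδ u := φ.injective (by rw [sub_eq_zero] at h; exact h)
    exact hu (this ▸ hSδmem u)
  -- Direction A assembled
  have dirA : γδ ≤ ⨅ u : {u : X // u ∉ Xδ},
      (⨅ w : Xδ, ‖G (u : X) - G (w : X)‖) / ‖G (u : X) - G (Sδ (u : X))‖ := by
    apply le_ciInf
    intro u
    rw [le_div_iff₀ (hden u u.2)]
    apply le_ciInf
    intro w
    rw [hGsubnorm, hGsubnorm]
    exact keyA u u.2 w w.2
  -- generic facts about the ratio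
  have hratio_nonneg : ∀ u : {u : X // u ∉ Xδ},
      0 ≤ (⨅ w : Xδ, ‖G (u : X) - G (w : X)‖) / ‖G (u : X) - G (Sδ (u : X))‖ := by
    intro u
    exact div_nonneg (Real.iInf_nonneg (fun w => norm_nonneg _)) (norm_nonneg _)
  have hbdI : BddBelow (Set.range (fun u : {u : X // u ∉ Xδ} =>
      (⨅ w : Xδ, ‖G (u : X) - G (w : X)‖) / ‖G (u : X) - G (Sδ (u : X))‖)) := by
    refine ⟨0, fun r hr => ?_⟩
    rcases hr with ⟨u, rfl⟩
    exact hratio_nonneg u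
  have hbdw : ∀ u : X, BddBelow (Set.range (fun w : Xδ => ‖G u - G (w : X)‖)) := by
    intro u
    exact ⟨0, fun r hr => by rcases hr with ⟨w, rfl⟩; exact norm_nonneg _⟩
  have hIle : ∀ u : {u : X // u ∉ Xδ},
      (⨅ u : {u : X // u ∉ Xδ},
        (⨅ w : Xδ, ‖G (u : X) - G (w : X)‖) / ‖G (u : X) - G (Sδ (u : X))‖) ≤
      (⨅ w : Xδ, ‖G (u : X) - G (w : X)‖) / ‖G (u : X) - G (Sδ (u : X))‖ :=
    fun u => ciInf_le hbdI u
  have hnum_le : ∀ u : X, (⨅ w : Xδ, ‖G u - G (w : X)‖) ≤ ‖G u - G (Sδ u)‖ := by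
    intro u
    exact ciInf_le (hbdw u) (⟨Sδ u, hSδmem u⟩ : Xδ)
  have hIle1 : (⨅ u : {u : X // u ∉ Xδ},
      (⨅ w : Xδ, ‖G (u : X) - G (w : X)‖) / ‖G (u : X) - G (Sδ (u : X))‖) ≤ 1 := by
    refine (hIle ⟨u₀, hu₀⟩).trans ?_
    rw [div_le_one (hden u₀ hu₀)]
    exact hnum_le u₀
  -- Direction B: for small ε the infimum is below γδ + ε
  haveI hne_z : Nonempty {z : X // z ∈ Xδ ∧ G z ≠ 0} := by
    obtain ⟨z₀, hz₀m, hz₀⟩ := Submodule.exists_mem_ne_zero_of_ne_bot hXδbot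
    exact ⟨⟨z₀, hz₀m, hGinj z₀ hz₀⟩⟩
  have dirBε : ∀ ε : ℝ, 0 < ε → γδ + ε < 1 → (⨅ u : {u : X // u ∉ Xδ},
      (⨅ w : Xδ, ‖G (u : X) - G (w : X)‖) / ‖G (u : X) - G (Sδ (u : X))‖) ≤ γδ + ε := by
    intro ε hε hε1
    obtain ⟨⟨z, hz, hGz⟩, hlt⟩ := exists_lt_of_ciInf_lt (f := fun z : {z : X // z ∈ Xδ ∧ G z ≠ 0} =>
      (⨆ y : Yδ, |G (z : X) (y : Y)| / ‖(y : Y)‖) / ‖G (z : X)‖)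
      (a := γδ + ε) (by rw [← hγδ]; linarith)
    rw [hsupz, hφnorm] at hlt
    have hz0 : z ≠ 0 := by rintro rfl; exact hGz (map_zero G)
    have hvpos : (0:ℝ) < ‖φ z‖ := norm_pos_iff.mpr (hφne z hz0)
    set v : Y := φ z with hv
    set e : Y := v - Q v with he
    have hQe : Q e = 0 := by rw [he, hQsub, hQQ, sub_self]
    have he0 : e ≠ 0 := by
      intro h
      have hvQ : v = Q v := by rw [← sub_eq_zero]; exact h
      have : ‖Q v‖ / ‖v‖ = 1 := by rw [← hvQ]; exact div_self (ne_of_gt hvpos)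
      rw [this] at hlt
      linarith
    have hepos : (0:ℝ) < ‖e‖ := norm_pos_iff.mpr he0
    set u : X := φ.symm e with hu
    have hφu : φ u = e := φ.apply_symm_apply e
    have hun : u ∉ Xδ := by
      intro hmem
      have h1 := hγmul u hmem
      rw [hφu, hQe, norm_zero] at h1
      nlinarith
    have hSδ0 : φ (Sδ u) = 0 := by
      have h1 := hmin' u 0 Xδ.zero_mem
      rw [map_zero, hφu] at h1
      have h2 : Q ((0:Y) - e) = 0 := by rw [hQsub, hQzero, hQe, sub_self]
      rw [h2, norm_zero] at h1
      have h3 : Q (φ (Sδ u) - e) = 0 :=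
        norm_le_zero_iff.mp h1
      rw [hQsub, hQe, sub_zero] at h3
      have h4 := hγmul (Sδ u) (hSδmem u)
      rw [h3, norm_zero] at h4
      have : ‖φ (Sδ u)‖ = 0 := le_antisymm (by nlinarith) (norm_nonneg _)
      exact norm_eq_zero.mp this
    have hden_eq : ‖G u - G (Sδ u)‖ = ‖e‖ := by
      rw [hGsubnorm, hφu, hSδ0, sub_zero]
    -- the competitor c • z
    set c : ℝ := ‖e‖^2 / ‖v‖^2 with hc
    have hinner_ev : ⟪e, Q v⟫_ℝ = 0 := hinner0 v (Q v) (hQmem v)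
    have hpv := hpyth v
    have hpv' : ‖v‖^2 = ‖Q v‖^2 + ‖e‖^2 := by rw [he]; exact hpv
    have hdecomp : e - c • v = (1-c) • e - c • Q v := by
      have hve : c • v = c • Q v + c • e := by
        rw [← smul_add]
        congr 1
        rw [he]
        abel
      rw [hve, sub_smul, one_smul]
      abel
    have hnorm_sq : ‖e - c • v‖^2 = (1-c)^2*‖e‖^2 + c^2*‖Q v‖^2 := by
      rw [hdecomp, norm_sub_sq_real, real_inner_smul_left, real_inner_smul_right,
        hinner_ev, norm_smul, norm_smul, mul_pow, mul_pow]
      simp only [Real.norm_eq_abs, sq_abs]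
      ring
    have hval : ‖e - c • v‖ ≤ ‖Q v‖ * ‖e‖ / ‖v‖ := by
      apply le_of_sq _ _ (norm_nonneg _)
        (div_nonneg (mul_nonneg (norm_nonneg _) (norm_nonneg _)) (norm_nonneg _))
      have hvne : ‖v‖ ≠ 0 := ne_of_gt hvpos
      have hc1 : 1 - c = ‖Q v‖^2/‖v‖^2 := by
        rw [hc]
        field_simp
        linarith [hpv']
      have hkey : (‖Q v‖^2/‖v‖^2)^2*‖e‖^2 + (‖e‖^2/‖v‖^2)^2*‖Q v‖^2
          = (‖Q v‖*‖e‖/‖v‖)^2 := by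
        rw [div_pow (‖Q v‖*‖e‖), hpv']
        have h2 : ‖Q v‖^2 + ‖e‖^2 ≠ 0 := by positivity
        field_simp
      rw [hnorm_sq, hc1, hc]
      exact le_of_eq hkey
    have hnum2 : (⨅ w : Xδ, ‖G u - G (w : X)‖) ≤ ‖Q v‖ * ‖e‖ / ‖v‖ := by
      refine le_trans (ciInf_le (hbdw u) (⟨c • z, Xδ.smul_mem c hz⟩ : Xδ)) ?_
      have : ‖G u - G (c • z)‖ = ‖e - c • v‖ := by
        rw [hGsubnorm, hφu, map_smul, hv]
      rw [this]
      exact hval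
    have hratio : (⨅ w : Xδ, ‖G u - G (w : X)‖) / ‖G u - G (Sδ u)‖ ≤ γδ + ε := by
      rw [hden_eq]
      have h1 : (⨅ w : Xδ, ‖G u - G (w : X)‖) / ‖e‖ ≤ (‖Q v‖ * ‖e‖ / ‖v‖) / ‖e‖ := by
        gcongr
      have h2 : (‖Q v‖ * ‖e‖ / ‖v‖) / ‖e‖ = ‖Q v‖ / ‖v‖ := by
        field_simp
      rw [h2] at h1
      exact h1.trans hlt.le
    exact (hIle ⟨u, hun⟩).trans hratio
  -- conclusion
  apply le_antisymm _ dirA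
  rcases le_or_gt 1 γδ with h1 | h1
  · exact hIle1.trans h1
  · by_contra hcon
    push_neg at hcon
    set I := ⨅ u : {u : X // u ∉ Xδ},
      (⨅ w : Xδ, ‖G (u : X) - G (w : X)‖) / ‖G (u : X) - G (Sδ (u : X))‖ with hIdef
    have hε : (0:ℝ) < min ((I - γδ)/2) ((1 - γδ)/2) := by
      apply lt_min <;> linarith
    have hε1 : γδ + min ((I - γδ)/2) ((1 - γδ)/2) < 1 := by
      have := min_le_right ((I - γδ)/2) ((1 - γδ)/2)
      linarith
    have := dirBε _ hε hε1
    have h3 := min_le_left ((I - γδ)/2) ((1 - γδ)/2)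
    linarith
end

section
/- Let X and Y be real Hilbert spaces, G ∈ Lis(X,Y'), and let X^δ ⊆ X and Y^δ ⊆ Y be closed linear subspaces with inf-sup constant γ^δ := inf{ ‖Gz‖_{(Y^δ)'}/‖Gz‖_{Y'} : z ∈ X^δ, Gz ≠ 0 } strictly positive. Let ⟨·,·⟩_δ be another inner product on Y^δ whose norm ‖·‖_δ satisfies m·‖y‖_δ² ≤ ‖y‖_Y² ≤ M·‖y‖_δ² for all y ∈ Y^δ, for constants 0 < m ≤ M. Then for every f ∈ Y' there exists a unique u^δ ∈ X^δ minimizing z ↦ sup_{0 ≠ y ∈ Y^δ} |(Gz − f)(y)|/‖y‖_δ over X^δ, and with u := G⁻¹f it satisfies ‖G(u − u^δ)‖_{Y'} ≤ (√M / (γ^δ √m)) · inf_{w ∈ X^δ} ‖G(u − w)‖_{Y'}, and consequently ‖u − u^δ‖_X ≤ √(M/m) · (‖G‖_{L(X,Y')} ‖G⁻¹‖_{L(Y',X)} / γ^δ) · inf_{w ∈ X^δ} ‖u − w‖_X. -/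
open scoped RealInnerProductSpace

/-- Operator norm of a real functional as a supremum of quotients. -/
theorem stmt10_opNorm_eq_iSup_div {E : Type*} [NormedAddCommGroup E] [NormedSpace ℝ E]
    (T : E →L[ℝ] ℝ) : ‖T‖ = ⨆ x : E, |T x| / ‖x‖ := by
  have hle : ∀ x : E, |T x| / ‖x‖ ≤ ‖T‖ := by
    intro x
    rcases eq_or_ne x 0 with rfl | hx
    · simp [T.opNorm_nonneg]
    · rw [div_le_iff₀ (norm_pos_iff.2 hx)]
      simpa [Real.norm_eq_abs] using T.le_opNorm x
  have hbdd : BddAbove (Set.range fun x : E => |T x| / ‖x‖) := by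
    refine ⟨‖T‖, ?_⟩
    rintro _ ⟨x, rfl⟩
    exact hle x
  refine le_antisymm ?_ (ciSup_le hle)
  refine T.opNorm_le_bound (Real.iSup_nonneg fun x => div_nonneg (abs_nonneg _) (norm_nonneg _))
    fun x => ?_
  rcases eq_or_ne x 0 with rfl | hx
  · simp
  · have := le_ciSup hbdd x
    rw [div_le_iff₀ (norm_pos_iff.2 hx)] at this
    simpa [Real.norm_eq_abs] using this

/-- Type synonym carrying the (discrete) inner product `ip` on the subspace `Yδ`. -/
def Stmt10Syn {Y : Type*} [AddCommGroup Y] [Module ℝ Y] (Yδ : Submodule ℝ Y) : Type _ := ↥Yδ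

namespace Stmt10Syn

variable {Y : Type*} [AddCommGroup Y] [Module ℝ Y] {Yδ : Submodule ℝ Y}

instance : AddCommGroup (Stmt10Syn Yδ) := inferInstanceAs (AddCommGroup ↥Yδ)
instance : Module ℝ (Stmt10Syn Yδ) := inferInstanceAs (Module ℝ ↥Yδ)

/-- The underlying element of `Y`. -/
def valₗ : Stmt10Syn Yδ →ₗ[ℝ] Y := Yδ.subtype

lemma val_mem (a : Stmt10Syn Yδ) : valₗ a ∈ Yδ := (show ↥Yδ from a).2

lemma val_inj {a b : Stmt10Syn Yδ} (h : valₗ a = valₗ b) : a = b := Subtype.ext h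

lemma val_eq_zero {a : Stmt10Syn Yδ} (h : valₗ a = 0) : a = 0 := val_inj (by simpa using h)

/-- Map from the submodule to the synonym. -/
def mkₗ : ↥Yδ →ₗ[ℝ] Stmt10Syn Yδ := LinearMap.id (R := ℝ) (M := ↥Yδ)

/-- Map from the synonym to the submodule. -/
def outₗ : Stmt10Syn Yδ →ₗ[ℝ] ↥Yδ := LinearMap.id (R := ℝ) (M := ↥Yδ)

@[simp] lemma coe_outₗ (a : Stmt10Syn Yδ) : ((outₗ a : ↥Yδ) : Y) = valₗ a := rfl

lemma outₗ_surj : Function.Surjective (outₗ (Yδ := Yδ)) := fun b => ⟨b, rfl⟩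

end Stmt10Syn

set_option maxHeartbeats 0 in
/-- Let `X`, `Y` be real Hilbert spaces, `G ∈ Lis(X,Y')`, `Xδ ⊆ X`,
`Yδ ⊆ Y` closed subspaces with inf-sup constant `γδ > 0`. Let `ip` be another inner
product on `Yδ` whose norm `‖y‖_δ := √(ip y y)` satisfies
`m‖y‖_δ² ≤ ‖y‖² ≤ M‖y‖_δ²` on `Yδ` with `0 < m ≤ M`. Then for every `f ∈ Y'` there is a
unique `uδ ∈ Xδ` minimizing `z ↦ sup_{0 ≠ y ∈ Yδ} |(Gz − f)(y)|/‖y‖_δ` over `Xδ`, and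
with `u := G⁻¹ f` it satisfies
`‖G(u − uδ)‖_{Y'} ≤ (√M/(γδ√m)) inf_{w ∈ Xδ} ‖G(u − w)‖_{Y'}` and
`‖u − uδ‖ ≤ √(M/m) (‖G‖ ‖G⁻¹‖ / γδ) inf_{w ∈ Xδ} ‖u − w‖`. -/
theorem stmt10
    {X Y : Type*}
    [NormedAddCommGroup X] [InnerProductSpace ℝ X] [CompleteSpace X]
    [NormedAddCommGroup Y] [InnerProductSpace ℝ Y] [CompleteSpace Y]
    (G : X ≃L[ℝ] (Y →L[ℝ] ℝ))
    (Xδ : Submodule ℝ X) (hXδ : IsClosed (Xδ : Set X))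
    (Yδ : Submodule ℝ Y) (hYδ : IsClosed (Yδ : Set Y))
    (γδ : ℝ)
    (hγδ : γδ = ⨅ z : {z : X // z ∈ Xδ ∧ G z ≠ 0},
        (⨆ y : Yδ, |G (z : X) (y : Y)| / ‖(y : Y)‖) / ‖G (z : X)‖)
    (hγδpos : 0 < γδ)
    (ip : Y → Y → ℝ)
    (hip_symm : ∀ y z, y ∈ Yδ → z ∈ Yδ → ip y z = ip z y)
    (hip_add : ∀ x y z, x ∈ Yδ → y ∈ Yδ → z ∈ Yδ → ip (x + y) z = ip x z + ip y z)
    (hip_smul : ∀ (c : ℝ) (y z : Y), y ∈ Yδ → z ∈ Yδ → ip (c • y) z = c * ip y z)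
    (hip_pos : ∀ y ∈ Yδ, y ≠ 0 → 0 < ip y y)
    (mc Mc : ℝ) (hmc : 0 < mc) (hmM : mc ≤ Mc)
    (hequiv : ∀ y ∈ Yδ, mc * ip y y ≤ ‖y‖ ^ 2 ∧ ‖y‖ ^ 2 ≤ Mc * ip y y)
    (f : Y →L[ℝ] ℝ) :
    (∃! uδ : X, uδ ∈ Xδ ∧
        ∀ z ∈ Xδ,
          (⨆ y : Yδ, |(G uδ - f) (y : Y)| / Real.sqrt (ip (y : Y) (y : Y))) ≤
          (⨆ y : Yδ, |(G z - f) (y : Y)| / Real.sqrt (ip (y : Y) (y : Y)))) ∧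
    (∀ uδ ∈ Xδ,
      (∀ z ∈ Xδ,
          (⨆ y : Yδ, |(G uδ - f) (y : Y)| / Real.sqrt (ip (y : Y) (y : Y))) ≤
          (⨆ y : Yδ, |(G z - f) (y : Y)| / Real.sqrt (ip (y : Y) (y : Y)))) →
        (‖G (G.symm f - uδ)‖ ≤
            (Real.sqrt Mc / (γδ * Real.sqrt mc)) * ⨅ w : Xδ, ‖G (G.symm f - (w : X))‖) ∧
        (‖G.symm f - uδ‖ ≤
            Real.sqrt (Mc / mc) *
              (‖(G : X →L[ℝ] (Y →L[ℝ] ℝ))‖ * ‖(G.symm : (Y →L[ℝ] ℝ) →L[ℝ] X)‖ / γδ) *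
              ⨅ w : Xδ, ‖G.symm f - (w : X)‖)) := by
  classical
  have hMc : (0:ℝ) < Mc := lt_of_lt_of_le hmc hmM
  have hsm : (0:ℝ) < Real.sqrt mc := Real.sqrt_pos.2 hmc
  have hsM : (0:ℝ) < Real.sqrt Mc := Real.sqrt_pos.2 hMc
  -- the inner-product-space structure on the synonym
  letI cd : InnerProductSpace.Core ℝ (Stmt10Syn Yδ) :=
    { inner := fun a b => ip (Stmt10Syn.valₗ a) (Stmt10Syn.valₗ b)
      conj_inner_symm := fun a b => by
        simpa using hip_symm (Stmt10Syn.valₗ b) (Stmt10Syn.valₗ a)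
          (Stmt10Syn.val_mem b) (Stmt10Syn.val_mem a)
      re_inner_nonneg := fun a => by
        rcases eq_or_ne a 0 with rfl | h
        · have h00 : ip (0 : Y) (0 : Y) = 0 := by
            have := hip_smul 0 0 0 Yδ.zero_mem Yδ.zero_mem
            simpa using this
          simp [h00]
        · have := hip_pos _ (Stmt10Syn.val_mem a) (fun hz => h (Stmt10Syn.val_eq_zero hz))
          simpa using this.le
      add_left := fun a b c => by
        simpa using hip_add _ _ _ (Stmt10Syn.val_mem a) (Stmt10Syn.val_mem b)
          (Stmt10Syn.val_mem c)
      smul_left := fun a b r => by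
        simpa using hip_smul r _ _ (Stmt10Syn.val_mem a) (Stmt10Syn.val_mem b)
      definite := fun a h => by
        by_contra hne
        exact absurd h
          (hip_pos _ (Stmt10Syn.val_mem a) (fun hz => hne (Stmt10Syn.val_eq_zero hz))).ne' }
  letI : NormedAddCommGroup (Stmt10Syn Yδ) := cd.toNormedAddCommGroup
  letI : InnerProductSpace ℝ (Stmt10Syn Yδ) := InnerProductSpace.ofCore cd.toCore
  have hnorm : ∀ a : Stmt10Syn Yδ,
      ‖a‖ = Real.sqrt (ip (Stmt10Syn.valₗ a) (Stmt10Syn.valₗ a)) := fun a => rfl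
  have hinner : ∀ a b : Stmt10Syn Yδ,
      (inner ℝ a b : ℝ) = ip (Stmt10Syn.valₗ a) (Stmt10Syn.valₗ b) := fun a b => rfl
  -- two-sided norm bounds between `Y`-norm and `δ`-norm
  have hhi : ∀ a : Stmt10Syn Yδ, ‖Stmt10Syn.valₗ a‖ ≤ Real.sqrt Mc * ‖a‖ := by
    intro a
    have h2 := (hequiv _ (Stmt10Syn.val_mem a)).2
    have h3 : ‖Stmt10Syn.valₗ a‖ = Real.sqrt (‖Stmt10Syn.valₗ a‖ ^ 2) := by
      rw [Real.sqrt_sq (norm_nonneg _)]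
    rw [h3, hnorm, ← Real.sqrt_mul hMc.le]
    exact Real.sqrt_le_sqrt h2
  have hlo : ∀ a : Stmt10Syn Yδ, Real.sqrt mc * ‖a‖ ≤ ‖Stmt10Syn.valₗ a‖ := by
    intro a
    have h1 := (hequiv _ (Stmt10Syn.val_mem a)).1
    rw [hnorm, ← Real.sqrt_mul hmc.le]
    calc Real.sqrt (mc * ip (Stmt10Syn.valₗ a) (Stmt10Syn.valₗ a))
        ≤ Real.sqrt (‖Stmt10Syn.valₗ a‖ ^ 2) := Real.sqrt_le_sqrt h1
      _ = ‖Stmt10Syn.valₗ a‖ := Real.sqrt_sq (norm_nonneg _)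
  -- completeness of the synonym
  haveI : CompleteSpace ↥Yδ := hYδ.completeSpace_coe
  haveI : CompleteSpace (Stmt10Syn Yδ) := by
    have hanti : AntilipschitzWith ((Real.sqrt mc)⁻¹).toNNReal
        (Stmt10Syn.outₗ (Yδ := Yδ)) := by
      apply AddMonoidHomClass.antilipschitz_of_bound
      intro a
      have h0 : ‖(Stmt10Syn.outₗ a : ↥Yδ)‖ = ‖Stmt10Syn.valₗ a‖ := rfl
      rw [h0, Real.coe_toNNReal _ (by positivity), inv_mul_eq_div, le_div_iff₀ hsm, mul_comm]
      exact hlo a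
    have hlip : LipschitzWith (Real.sqrt Mc).toNNReal (Stmt10Syn.outₗ (Yδ := Yδ)) := by
      apply AddMonoidHomClass.lipschitz_of_bound
      intro a
      exact hhi a
    refine (completeSpace_iff_isComplete_range
      (hanti.isUniformInducing hlip.uniformContinuous)).2 ?_
    rw [Set.range_eq_univ.mpr Stmt10Syn.outₗ_surj]
    exact completeSpace_iff_isComplete_univ.1 inferInstance
  haveI : CompleteSpace ↥Xδ := hXδ.completeSpace_coe
  -- restriction maps
  have hresbound : ∀ g : Y →L[ℝ] ℝ, ∀ a : Stmt10Syn Yδ,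
      ‖g (Stmt10Syn.valₗ a)‖ ≤ (Real.sqrt Mc * ‖g‖) * ‖a‖ := by
    intro g a
    calc ‖g (Stmt10Syn.valₗ a)‖ ≤ ‖g‖ * ‖Stmt10Syn.valₗ a‖ := g.le_opNorm _
      _ ≤ ‖g‖ * (Real.sqrt Mc * ‖a‖) :=
          mul_le_mul_of_nonneg_left (hhi a) (norm_nonneg g)
      _ = (Real.sqrt Mc * ‖g‖) * ‖a‖ := by ring
  let resδ : (Y →L[ℝ] ℝ) → (Stmt10Syn Yδ →L[ℝ] ℝ) := fun g =>
    LinearMap.mkContinuous (g.toLinearMap.comp Stmt10Syn.valₗ) (Real.sqrt Mc * ‖g‖)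
      (hresbound g)
  have hresδ_apply : ∀ (g : Y →L[ℝ] ℝ) (a : Stmt10Syn Yδ),
      resδ g a = g (Stmt10Syn.valₗ a) := fun g a => rfl
  let resY : (Y →L[ℝ] ℝ) → (↥Yδ →L[ℝ] ℝ) := fun g => g.comp Yδ.subtypeL
  have hresY_apply : ∀ (g : Y →L[ℝ] ℝ) (y : ↥Yδ), resY g y = g (y : Y) := fun g y => rfl
  -- the suprema in the statement are operator norms
  have hsupδ : ∀ g : Y →L[ℝ] ℝ,
      (⨆ y : Yδ, |g (y : Y)| / Real.sqrt (ip (y : Y) (y : Y))) = ‖resδ g‖ := by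
    intro g
    rw [stmt10_opNorm_eq_iSup_div]
    refine iSup_congr fun a => ?_
    rw [hnorm a]
    rfl
  have hsupY : ∀ g : Y →L[ℝ] ℝ,
      (⨆ y : Yδ, |g (y : Y)| / ‖(y : Y)‖) = ‖resY g‖ := by
    intro g
    rw [stmt10_opNorm_eq_iSup_div]
    exact iSup_congr fun a => rfl
  -- comparisons between the three dual norms
  have hc1 : ∀ g : Y →L[ℝ] ℝ, ‖resδ g‖ ≤ Real.sqrt Mc * ‖resY g‖ := by
    intro g
    refine ContinuousLinearMap.opNorm_le_bound _ (by positivity) fun a => ?_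
    have h1 : ‖resδ g a‖ = ‖resY g (Stmt10Syn.outₗ a)‖ := rfl
    calc ‖resδ g a‖ = ‖resY g (Stmt10Syn.outₗ a)‖ := h1
      _ ≤ ‖resY g‖ * ‖(Stmt10Syn.outₗ a : ↥Yδ)‖ := (resY g).le_opNorm _
      _ = ‖resY g‖ * ‖Stmt10Syn.valₗ a‖ := rfl
      _ ≤ ‖resY g‖ * (Real.sqrt Mc * ‖a‖) :=
          mul_le_mul_of_nonneg_left (hhi a) (ContinuousLinearMap.opNorm_nonneg _)
      _ = Real.sqrt Mc * ‖resY g‖ * ‖a‖ := by ring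
  have hc2 : ∀ g : Y →L[ℝ] ℝ, Real.sqrt mc * ‖resY g‖ ≤ ‖resδ g‖ := by
    intro g
    have : ‖resY g‖ ≤ (Real.sqrt mc)⁻¹ * ‖resδ g‖ := by
      refine ContinuousLinearMap.opNorm_le_bound _ (by positivity) fun y => ?_
      have h1 : ‖resY g y‖ = ‖resδ g (Stmt10Syn.mkₗ y)‖ := rfl
      have h2 : ‖(y : Y)‖ = ‖Stmt10Syn.valₗ (Stmt10Syn.mkₗ y)‖ := rfl
      calc ‖resY g y‖ = ‖resδ g (Stmt10Syn.mkₗ y)‖ := h1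
        _ ≤ ‖resδ g‖ * ‖Stmt10Syn.mkₗ y‖ := (resδ g).le_opNorm _
        _ ≤ ‖resδ g‖ * ((Real.sqrt mc)⁻¹ * ‖Stmt10Syn.valₗ (Stmt10Syn.mkₗ y)‖) := by
            refine mul_le_mul_of_nonneg_left ?_ (ContinuousLinearMap.opNorm_nonneg _)
            rw [inv_mul_eq_div, le_div_iff₀ hsm, mul_comm]
            exact hlo _
        _ = (Real.sqrt mc)⁻¹ * ‖resδ g‖ * ‖y‖ := by
            have h2' : ‖Stmt10Syn.valₗ (Stmt10Syn.mkₗ y)‖ = ‖y‖ := rfl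
            rw [h2']; ring
    calc Real.sqrt mc * ‖resY g‖ ≤ Real.sqrt mc * ((Real.sqrt mc)⁻¹ * ‖resδ g‖) :=
          mul_le_mul_of_nonneg_left this hsm.le
      _ = ‖resδ g‖ := by field_simp
  have htriv : ∀ g : Y →L[ℝ] ℝ, ‖resY g‖ ≤ ‖g‖ := by
    intro g
    refine ContinuousLinearMap.opNorm_le_bound _ (norm_nonneg g) fun y => ?_
    calc ‖resY g y‖ = ‖g (y : Y)‖ := rfl
      _ ≤ ‖g‖ * ‖(y : Y)‖ := g.le_opNorm _
      _ = ‖g‖ * ‖y‖ := rfl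
  -- the inf-sup inequality
  have hinfsup : ∀ z ∈ Xδ, γδ * ‖G z‖ ≤ ‖resY (G z)‖ := by
    intro z hz
    rcases eq_or_ne (G z) 0 with h0 | h0
    · rw [h0]
      rw [norm_zero, mul_zero]
      exact ContinuousLinearMap.opNorm_nonneg (resY 0)
    · have hbdd : BddBelow (Set.range fun z : {z : X // z ∈ Xδ ∧ G z ≠ 0} =>
          (⨆ y : Yδ, |G (z : X) (y : Y)| / ‖(y : Y)‖) / ‖G (z : X)‖) := by
        refine ⟨0, ?_⟩
        rintro _ ⟨w, rfl⟩
        have : (0:ℝ) ≤ ⨆ y : Yδ, |G (w : X) (y : Y)| / ‖(y : Y)‖ :=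
          Real.iSup_nonneg fun y => by positivity
        positivity
      have hle := hγδ ▸ ciInf_le hbdd (⟨z, hz, h0⟩ : {z : X // z ∈ Xδ ∧ G z ≠ 0})
      rw [hsupY, le_div_iff₀ (norm_pos_iff.2 h0)] at hle
      simpa using hle
  -- γδ ≤ 1
  have hγδ1 : γδ ≤ 1 := by
    rcases isEmpty_or_nonempty {z : X // z ∈ Xδ ∧ G z ≠ 0} with hE | hNE
    · exfalso
      rw [hγδ, Real.iInf_of_isEmpty] at hγδpos
      exact lt_irrefl 0 hγδpos
    · obtain ⟨z0⟩ := hNE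
      have hbdd : BddBelow (Set.range fun z : {z : X // z ∈ Xδ ∧ G z ≠ 0} =>
          (⨆ y : Yδ, |G (z : X) (y : Y)| / ‖(y : Y)‖) / ‖G (z : X)‖) := by
        refine ⟨0, ?_⟩
        rintro _ ⟨w, rfl⟩
        have : (0:ℝ) ≤ ⨆ y : Yδ, |G (w : X) (y : Y)| / ‖(y : Y)‖ :=
          Real.iSup_nonneg fun y => by positivity
        positivity
      have hle := hγδ ▸ ciInf_le hbdd z0
      refine hle.trans ?_
      rw [hsupY, div_le_one (norm_pos_iff.2 z0.2.2)]
      exact htriv _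
  -- Riesz representation on the synonym
  set Gc : X →L[ℝ] (Y →L[ℝ] ℝ) := (G : X →L[ℝ] (Y →L[ℝ] ℝ)) with hGc
  set Gs : (Y →L[ℝ] ℝ) →L[ℝ] X := (G.symm : (Y →L[ℝ] ℝ) →L[ℝ] X) with hGs
  let Dδ := InnerProductSpace.toDual ℝ (Stmt10Syn Yδ)
  let Φ : (Y →L[ℝ] ℝ) → Stmt10Syn Yδ := fun g => Dδ.symm (resδ g)
  have hΦnorm : ∀ g : Y →L[ℝ] ℝ, ‖Φ g‖ = ‖resδ g‖ := fun g =>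
    LinearIsometryEquiv.norm_map _ _
  have hresδ_add : ∀ g h : Y →L[ℝ] ℝ, resδ (g + h) = resδ g + resδ h := by
    intro g h
    ext a
    simp [hresδ_apply]
  have hresδ_sub : ∀ g h : Y →L[ℝ] ℝ, resδ (g - h) = resδ g - resδ h := by
    intro g h
    ext a
    simp [hresδ_apply]
  have hresδ_smul : ∀ (c : ℝ) (g : Y →L[ℝ] ℝ), resδ (c • g) = c • resδ g := by
    intro c g
    ext a
    simp [hresδ_apply]
  have hΦadd : ∀ g h : Y →L[ℝ] ℝ, Φ (g + h) = Φ g + Φ h := by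
    intro g h
    show Dδ.symm (resδ (g + h)) = Dδ.symm (resδ g) + Dδ.symm (resδ h)
    rw [hresδ_add, map_add]
  have hΦsub : ∀ g h : Y →L[ℝ] ℝ, Φ (g - h) = Φ g - Φ h := by
    intro g h
    show Dδ.symm (resδ (g - h)) = Dδ.symm (resδ g) - Dδ.symm (resδ h)
    rw [hresδ_sub, map_sub]
  have hΦsmul : ∀ (c : ℝ) (g : Y →L[ℝ] ℝ), Φ (c • g) = c • Φ g := by
    intro c g
    show Dδ.symm (resδ (c • g)) = c • Dδ.symm (resδ g)
    rw [hresδ_smul, map_smulₛₗ]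
    simp
  have hΦinner : ∀ (g : Y →L[ℝ] ℝ) (a : Stmt10Syn Yδ),
      (inner ℝ (Φ g) a : ℝ) = g (Stmt10Syn.valₗ a) := by
    intro g a
    have := InnerProductSpace.toDual_symm_apply (𝕜 := ℝ) (E := Stmt10Syn Yδ)
      (y := resδ g) (x := a)
    rw [hresδ_apply g a] at this
    exact this
  -- the discrete operator
  let Aℓ : X →ₗ[ℝ] Stmt10Syn Yδ :=
    { toFun := fun z => Φ (G z)
      map_add' := fun z w => by
        show Φ (G (z + w)) = Φ (G z) + Φ (G w)
        rw [map_add, hΦadd]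
      map_smul' := fun c z => by
        show Φ (G (c • z)) = c • Φ (G z)
        rw [map_smul, hΦsmul] }
  have hAapp : ∀ z : X, Aℓ z = Φ (G z) := fun z => rfl
  have hAnorm : ∀ z : X, ‖Aℓ z‖ = ‖resδ (G z)‖ := fun z => hΦnorm (G z)
  have hAlow : ∀ z ∈ Xδ, (γδ * Real.sqrt mc) * ‖G z‖ ≤ ‖Aℓ z‖ := by
    intro z hz
    rw [hAnorm]
    calc (γδ * Real.sqrt mc) * ‖G z‖ = Real.sqrt mc * (γδ * ‖G z‖) := by ring
      _ ≤ Real.sqrt mc * ‖resY (G z)‖ :=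
          mul_le_mul_of_nonneg_left (hinfsup z hz) hsm.le
      _ ≤ ‖resδ (G z)‖ := hc2 _
  have hXlow : ∀ z ∈ Xδ, ‖z‖ ≤ (‖Gs‖ / (γδ * Real.sqrt mc)) * ‖Aℓ z‖ := by
    intro z hz
    have h1 : ‖z‖ ≤ ‖Gs‖ * ‖G z‖ := by
      have h := Gs.le_opNorm (G z)
      have hz' : Gs (G z) = z := by rw [hGs]; exact G.symm_apply_apply z
      rwa [hz'] at h
    have h2 : ‖G z‖ ≤ ‖Aℓ z‖ / (γδ * Real.sqrt mc) := by
      rw [le_div_iff₀ (by positivity)]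
      calc ‖G z‖ * (γδ * Real.sqrt mc) = (γδ * Real.sqrt mc) * ‖G z‖ := by ring
        _ ≤ ‖Aℓ z‖ := hAlow z hz
    calc ‖z‖ ≤ ‖Gs‖ * ‖G z‖ := h1
      _ ≤ ‖Gs‖ * (‖Aℓ z‖ / (γδ * Real.sqrt mc)) :=
          mul_le_mul_of_nonneg_left h2 (ContinuousLinearMap.opNorm_nonneg _)
      _ = (‖Gs‖ / (γδ * Real.sqrt mc)) * ‖Aℓ z‖ := by ring
  have hAup : ∀ z : X, ‖Aℓ z‖ ≤ (Real.sqrt Mc * ‖Gc‖) * ‖z‖ := by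
    intro z
    rw [hAnorm]
    calc ‖resδ (G z)‖ ≤ Real.sqrt Mc * ‖resY (G z)‖ := hc1 _
      _ ≤ Real.sqrt Mc * ‖G z‖ := mul_le_mul_of_nonneg_left (htriv _) hsM.le
      _ ≤ Real.sqrt Mc * (‖Gc‖ * ‖z‖) := by
          refine mul_le_mul_of_nonneg_left ?_ hsM.le
          have h := Gc.le_opNorm z
          have hz' : Gc z = G z := by rw [hGc]; rfl
          rwa [hz'] at h
      _ = (Real.sqrt Mc * ‖Gc‖) * ‖z‖ := by ring
  -- the image of `Xδ` is a closed subspace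
  let V : Submodule ℝ (Stmt10Syn Yδ) := Xδ.map Aℓ
  have hVclosed : IsClosed (V : Set (Stmt10Syn Yδ)) := by
    let A' : ↥Xδ →ₗ[ℝ] Stmt10Syn Yδ := Aℓ.comp Xδ.subtype
    have hanti : AntilipschitzWith (‖Gs‖ / (γδ * Real.sqrt mc)).toNNReal A' := by
      apply AddMonoidHomClass.antilipschitz_of_bound
      intro x
      rw [Real.coe_toNNReal _ (by positivity)]
      exact hXlow (x : X) x.2
    have hlip : LipschitzWith (Real.sqrt Mc * ‖Gc‖).toNNReal A' := by
      apply AddMonoidHomClass.lipschitz_of_bound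
      intro x
      exact hAup (x : X)
    have hrange : Set.range A' = (V : Set (Stmt10Syn Yδ)) := by
      ext a
      constructor
      · rintro ⟨x, rfl⟩
        exact ⟨(x : X), x.2, rfl⟩
      · rintro ⟨z, hz, rfl⟩
        exact ⟨⟨z, hz⟩, rfl⟩
    rw [← hrange]
    exact hanti.isClosed_range hlip.uniformContinuous
  -- relating the objective to distances in the synonym
  have hobj : ∀ z : X,
      (⨆ y : Yδ, |(G z - f) (y : Y)| / Real.sqrt (ip (y : Y) (y : Y))) = ‖Aℓ z - Φ f‖ := by
    intro z
    rw [hsupδ]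
    have h1 : Aℓ z - Φ f = Φ (G z - f) := by rw [hΦsub, hAapp]
    rw [h1, hΦnorm]
  have hbddV : BddBelow (Set.range fun w : (V : Set (Stmt10Syn Yδ)) => ‖Φ f - ↑w‖) := by
    refine ⟨0, ?_⟩
    rintro _ ⟨w, rfl⟩
    exact norm_nonneg _
  -- any minimizer realizes the distance to `V`
  have hminiInf : ∀ ud, ud ∈ Xδ →
      (∀ z ∈ Xδ,
        (⨆ y : Yδ, |(G ud - f) (y : Y)| / Real.sqrt (ip (y : Y) (y : Y))) ≤
        (⨆ y : Yδ, |(G z - f) (y : Y)| / Real.sqrt (ip (y : Y) (y : Y)))) →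
      ‖Φ f - Aℓ ud‖ = ⨅ w : (V : Set (Stmt10Syn Yδ)), ‖Φ f - ↑w‖ := by
    intro ud hud hmin
    refine le_antisymm ?_ ?_
    · refine le_ciInf fun w => ?_
      obtain ⟨z, hz, hzw⟩ := Submodule.mem_map.1 w.2
      have h1 := hmin z hz
      rw [hobj, hobj] at h1
      calc ‖Φ f - Aℓ ud‖ = ‖Aℓ ud - Φ f‖ := norm_sub_rev _ _
        _ ≤ ‖Aℓ z - Φ f‖ := h1
        _ = ‖Φ f - Aℓ z‖ := norm_sub_rev _ _
        _ = ‖Φ f - ↑w‖ := by rw [hzw]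
    · exact ciInf_le hbddV (⟨Aℓ ud, Submodule.mem_map_of_mem hud⟩ : (V : Set (Stmt10Syn Yδ)))
  -- existence of the minimizer
  obtain ⟨v, hvV, hvmin⟩ :=
    Submodule.exists_norm_eq_iInf_of_complete_subspace V (hVclosed.isComplete) (Φ f)
  obtain ⟨z0, hz0, hz0v⟩ := Submodule.mem_map.1 hvV
  have hmin0 : ∀ z ∈ Xδ,
      (⨆ y : Yδ, |(G z0 - f) (y : Y)| / Real.sqrt (ip (y : Y) (y : Y))) ≤
      (⨆ y : Yδ, |(G z - f) (y : Y)| / Real.sqrt (ip (y : Y) (y : Y))) := by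
    intro z hz
    rw [hobj, hobj]
    calc ‖Aℓ z0 - Φ f‖ = ‖Φ f - Aℓ z0‖ := norm_sub_rev _ _
      _ = ‖Φ f - v‖ := by rw [hz0v]
      _ ≤ ‖Φ f - Aℓ z‖ :=
          hvmin ▸ ciInf_le hbddV (⟨Aℓ z, Submodule.mem_map_of_mem hz⟩ :
            (V : Set (Stmt10Syn Yδ)))
      _ = ‖Aℓ z - Φ f‖ := norm_sub_rev _ _
  -- uniqueness of the minimizer
  have huniq : ∀ u1, u1 ∈ Xδ →
      (∀ z ∈ Xδ,
        (⨆ y : Yδ, |(G u1 - f) (y : Y)| / Real.sqrt (ip (y : Y) (y : Y))) ≤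
        (⨆ y : Yδ, |(G z - f) (y : Y)| / Real.sqrt (ip (y : Y) (y : Y)))) → u1 = z0 := by
    intro u1 h1X h1min
    have hA1 := hminiInf u1 h1X h1min
    have horth1 := (Submodule.norm_eq_iInf_iff_real_inner_eq_zero V
      (Submodule.mem_map_of_mem h1X)).1 hA1
    have hA0 := hminiInf z0 hz0 hmin0
    have horth0 := (Submodule.norm_eq_iInf_iff_real_inner_eq_zero V
      (Submodule.mem_map_of_mem hz0)).1 hA0
    have hdiff : ∀ w ∈ V, (inner ℝ (Aℓ u1 - Aℓ z0) w : ℝ) = 0 := by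
      intro w hw
      have e1 := horth1 w hw
      have e0 := horth0 w hw
      have : Aℓ u1 - Aℓ z0 = (Φ f - Aℓ z0) - (Φ f - Aℓ u1) := by abel
      rw [this, inner_sub_left, e0, e1, sub_zero]
    have hzero := hdiff (Aℓ u1 - Aℓ z0)
      (Submodule.sub_mem V (Submodule.mem_map_of_mem h1X) (Submodule.mem_map_of_mem hz0))
    have hAeq : Aℓ u1 - Aℓ z0 = 0 := by
      have := inner_self_eq_zero (𝕜 := ℝ) (x := Aℓ u1 - Aℓ z0)
      exact this.1 hzero
    have hsub : u1 - z0 ∈ Xδ := Submodule.sub_mem Xδ h1X hz0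
    have h0 : ‖u1 - z0‖ ≤ (‖Gs‖ / (γδ * Real.sqrt mc)) * ‖Aℓ (u1 - z0)‖ := hXlow _ hsub
    rw [map_sub, hAeq, norm_zero, mul_zero] at h0
    have : u1 - z0 = 0 := by
      have := norm_le_zero_iff.1 h0
      exact this
    exact sub_eq_zero.1 this
  -- assemble the statement
  haveI : Nonempty ↥Xδ := ⟨0⟩
  refine ⟨⟨z0, ⟨hz0, hmin0⟩, fun u1 h1 => huniq u1 h1.1 h1.2⟩, ?_⟩
  intro uδ huδ hminu
  -- transporting `Y'` to `Y` via the Riesz isometry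
  set C₁ : ℝ := Real.sqrt Mc / (γδ * Real.sqrt mc) with hC₁
  have hC₁pos : 0 < C₁ := by positivity
  have hC₁ge1 : 1 ≤ C₁ := by
    rw [hC₁, le_div_iff₀ (by positivity), one_mul]
    calc γδ * Real.sqrt mc ≤ 1 * Real.sqrt mc :=
          mul_le_mul_of_nonneg_right hγδ1 hsm.le
      _ = Real.sqrt mc := one_mul _
      _ ≤ Real.sqrt Mc := Real.sqrt_le_sqrt hmM
  let J := InnerProductSpace.toDual ℝ Y
  let τ : (Y →L[ℝ] ℝ) → Y := fun g => J.symm g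
  have hτnorm : ∀ g : Y →L[ℝ] ℝ, ‖τ g‖ = ‖g‖ := fun g => LinearIsometryEquiv.norm_map _ _
  have hτsub : ∀ g h : Y →L[ℝ] ℝ, τ (g - h) = τ g - τ h := fun g h => map_sub _ _ _
  have hτadd : ∀ g h : Y →L[ℝ] ℝ, τ (g + h) = τ g + τ h := fun g h => map_add _ _ _
  have hτsmul : ∀ (c : ℝ) (g : Y →L[ℝ] ℝ), τ (c • g) = c • τ g := by
    intro c g
    show J.symm (c • g) = c • J.symm g
    rw [map_smulₛₗ]
    simp
  let Tℓ : X →ₗ[ℝ] Y :=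
    { toFun := fun z => τ (G z)
      map_add' := fun z w => by
        show τ (G (z + w)) = τ (G z) + τ (G w)
        rw [map_add, hτadd]
      map_smul' := fun c z => by
        show τ (G (c • z)) = c • τ (G z)
        rw [map_smul, hτsmul] }
  have hTapp : ∀ z : X, Tℓ z = τ (G z) := fun z => rfl
  have hTnorm : ∀ z : X, ‖Tℓ z‖ = ‖G z‖ := fun z => hτnorm (G z)
  let S' : Submodule ℝ Y := Xδ.map Tℓ
  have hS'closed : IsClosed (S' : Set Y) := by
    let T' : ↥Xδ →ₗ[ℝ] Y := Tℓ.comp Xδ.subtype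
    have hanti : AntilipschitzWith (‖Gs‖).toNNReal T' := by
      apply AddMonoidHomClass.antilipschitz_of_bound
      intro x
      rw [Real.coe_toNNReal _ (ContinuousLinearMap.opNorm_nonneg _)]
      have h := Gs.le_opNorm (G (x : X))
      have hz' : Gs (G (x : X)) = (x : X) := by rw [hGs]; exact G.symm_apply_apply _
      rw [hz'] at h
      calc ‖x‖ = ‖(x : X)‖ := rfl
        _ ≤ ‖Gs‖ * ‖G (x : X)‖ := h
        _ = ‖Gs‖ * ‖T' x‖ := by rw [show ‖T' x‖ = ‖G (x : X)‖ from hTnorm (x : X)]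
    have hlip : LipschitzWith (‖Gc‖).toNNReal T' := by
      apply AddMonoidHomClass.lipschitz_of_bound
      intro x
      rw [show ‖T' x‖ = ‖G (x : X)‖ from hTnorm (x : X)]
      have h := Gc.le_opNorm (x : X)
      have hz' : Gc (x : X) = G (x : X) := by rw [hGc]; rfl
      rwa [hz'] at h
    have hrange : Set.range T' = (S' : Set Y) := by
      ext a
      constructor
      · rintro ⟨x, rfl⟩
        exact ⟨(x : X), x.2, rfl⟩
      · rintro ⟨z, hz, rfl⟩
        exact ⟨⟨z, hz⟩, rfl⟩
    rw [← hrange]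
    exact hanti.isClosed_range hlip.uniformContinuous
  -- the composite map `Ψ`
  let Ψℓ : Y →ₗ[ℝ] Stmt10Syn Yδ :=
    { toFun := fun x => Φ (J x)
      map_add' := fun x y => by
        show Φ (J (x + y)) = Φ (J x) + Φ (J y)
        rw [map_add, hΦadd]
      map_smul' := fun c x => by
        show Φ (J (c • x)) = c • Φ (J x)
        rw [map_smulₛₗ]
        simp only [starRingEnd_apply, star_trivial]
        rw [hΦsmul] }
  have hΨτ : ∀ g : Y →L[ℝ] ℝ, Ψℓ (τ g) = Φ g := by
    intro g
    show Φ (J (J.symm g)) = Φ g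
    rw [LinearIsometryEquiv.apply_symm_apply]
  have hΨnorm : ∀ x : Y, ‖Ψℓ x‖ ≤ Real.sqrt Mc * ‖x‖ := by
    intro x
    calc ‖Ψℓ x‖ = ‖resδ (J x)‖ := hΦnorm (J x)
      _ ≤ Real.sqrt Mc * ‖resY (J x)‖ := hc1 _
      _ ≤ Real.sqrt Mc * ‖(J x : Y →L[ℝ] ℝ)‖ := mul_le_mul_of_nonneg_left (htriv _) hsM.le
      _ = Real.sqrt Mc * ‖x‖ := by rw [LinearIsometryEquiv.norm_map]
  -- residual and its projection onto `S'`
  have hfu : G (G.symm f) = f := G.apply_symm_apply f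
  set ρ : Y := τ (f - G uδ) with hρ
  obtain ⟨σ, hσS, hσmin⟩ :=
    Submodule.exists_norm_eq_iInf_of_complete_subspace S' (hS'closed.isComplete) ρ
  have horthσ := (Submodule.norm_eq_iInf_iff_real_inner_eq_zero S' hσS).1 hσmin
  -- orthogonality of the residual in the δ-geometry
  have hA := hminiInf uδ huδ hminu
  have horthA := (Submodule.norm_eq_iInf_iff_real_inner_eq_zero V
    (Submodule.mem_map_of_mem huδ)).1 hA
  have hb0 : ∀ z ∈ Xδ, (inner ℝ (Ψℓ ρ) (Aℓ z) : ℝ) = 0 := by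
    intro z hz
    have h1 : Ψℓ ρ = Φ (f - G uδ) := hΨτ _
    have h2 : Φ (f - G uδ) = Φ f - Aℓ uδ := by rw [hΦsub]; rfl
    rw [h1, h2]
    exact horthA _ (Submodule.mem_map_of_mem hz)
  -- the sharp bound `‖ρ‖ ≤ C₁ * ‖ρ - σ‖`
  have hρσ : (inner ℝ (ρ - σ) σ : ℝ) = 0 := horthσ σ hσS
  have hpyth : ‖ρ‖ ^ 2 = ‖σ‖ ^ 2 + ‖ρ - σ‖ ^ 2 := by
    have h1 : ρ = σ + (ρ - σ) := by abel
    have h2 : (inner ℝ σ (ρ - σ) : ℝ) = 0 := by rw [real_inner_comm]; exact hρσ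
    calc ‖ρ‖ ^ 2 = ‖σ + (ρ - σ)‖ ^ 2 := by rw [← h1]
      _ = ‖σ‖ ^ 2 + 2 * (inner ℝ σ (ρ - σ) : ℝ) + ‖ρ - σ‖ ^ 2 := norm_add_sq_real _ _
      _ = ‖σ‖ ^ 2 + ‖ρ - σ‖ ^ 2 := by rw [h2]; ring
  obtain ⟨z₁, hz₁, hz₁σ⟩ := Submodule.mem_map.1 hσS
  have hΨσ : Ψℓ σ = Aℓ z₁ := by
    rw [← hz₁σ, hTapp, hΨτ]
    rfl
  set tσ : ℝ := ‖Ψℓ σ‖ with htσ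
  have hb0σ : (inner ℝ (Ψℓ ρ) (Ψℓ σ) : ℝ) = 0 := by rw [hΨσ]; exact hb0 z₁ hz₁
  have htσlow : γδ * Real.sqrt mc * ‖σ‖ ≤ tσ := by
    rw [htσ, hΨσ, ← hz₁σ, hTnorm]
    exact hAlow z₁ hz₁
  have hρbound : ‖ρ‖ ≤ C₁ * ‖ρ - σ‖ := by
    by_cases hσ0 : σ = 0
    · have : ‖ρ - σ‖ = ‖ρ‖ := by rw [hσ0, sub_zero]
      rw [this]
      exact le_mul_of_one_le_left (norm_nonneg _) hC₁ge1
    · have hσpos : 0 < ‖σ‖ := norm_pos_iff.2 hσ0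
      have htσpos : 0 < tσ := lt_of_lt_of_le (by positivity) htσlow
      -- the auxiliary vector `v`
      let Fvlin : Y →ₗ[ℝ] ℝ :=
        { toFun := fun x => (inner ℝ (Ψℓ σ) (Ψℓ x) : ℝ)
          map_add' := fun x y => by
            show (inner ℝ (Ψℓ σ) (Ψℓ (x + y)) : ℝ) =
              (inner ℝ (Ψℓ σ) (Ψℓ x) : ℝ) + (inner ℝ (Ψℓ σ) (Ψℓ y) : ℝ)
            rw [map_add, inner_add_right]
          map_smul' := fun c x => by
            show (inner ℝ (Ψℓ σ) (Ψℓ (c • x)) : ℝ) = c • (inner ℝ (Ψℓ σ) (Ψℓ x) : ℝ)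
            rw [map_smul, real_inner_smul_right, smul_eq_mul] }
      have hFvbound : ∀ x : Y, ‖Fvlin x‖ ≤ (tσ * Real.sqrt Mc) * ‖x‖ := by
        intro x
        have h1 : ‖Fvlin x‖ = |(inner ℝ (Ψℓ σ) (Ψℓ x) : ℝ)| := rfl
        rw [h1]
        calc |(inner ℝ (Ψℓ σ) (Ψℓ x) : ℝ)| ≤ ‖Ψℓ σ‖ * ‖Ψℓ x‖ := abs_real_inner_le_norm _ _
          _ ≤ tσ * (Real.sqrt Mc * ‖x‖) :=
              mul_le_mul_of_nonneg_left (hΨnorm x) (norm_nonneg _)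
          _ = (tσ * Real.sqrt Mc) * ‖x‖ := by ring
      let Fv : Y →L[ℝ] ℝ := LinearMap.mkContinuous Fvlin (tσ * Real.sqrt Mc) hFvbound
      let v : Y := τ Fv
      have hvinner : ∀ x : Y, (inner ℝ v x : ℝ) = (inner ℝ (Ψℓ σ) (Ψℓ x) : ℝ) := by
        intro x
        exact InnerProductSpace.toDual_symm_apply (𝕜 := ℝ) (E := Y) (y := Fv) (x := x)
      have hvnorm : ‖v‖ ≤ tσ * Real.sqrt Mc := by
        have h1 : ‖v‖ = ‖Fv‖ := hτnorm Fv
        rw [h1]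
        exact LinearMap.mkContinuous_norm_le _ (by positivity) _
      have hvσ : (inner ℝ v σ : ℝ) = tσ ^ 2 := by
        rw [hvinner σ, real_inner_self_eq_norm_sq]
      have hF5 : tσ ^ 2 = (inner ℝ (σ - ρ) v : ℝ) := by
        have h1 : (inner ℝ (σ - ρ) v : ℝ) = (inner ℝ v σ : ℝ) - (inner ℝ v ρ : ℝ) := by
          rw [real_inner_comm, inner_sub_right]
        have h2 : (inner ℝ v ρ : ℝ) = 0 := by
          rw [hvinner ρ, real_inner_comm]
          exact hb0σ
        rw [h1, h2, hvσ, sub_zero]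
      set α : ℝ := tσ ^ 2 / ‖σ‖ ^ 2 with hα
      have hσρσ : (inner ℝ (σ - ρ) σ : ℝ) = 0 := by
        rw [← neg_sub ρ σ, inner_neg_left, hρσ, neg_zero]
      have hkey1 : tσ ^ 2 ≤ ‖ρ - σ‖ * ‖v - α • σ‖ := by
        have h1 : (inner ℝ (σ - ρ) (v - α • σ) : ℝ) =
            (inner ℝ (σ - ρ) v : ℝ) - α * (inner ℝ (σ - ρ) σ : ℝ) := by
          rw [inner_sub_right, real_inner_smul_right]
        rw [hσρσ, mul_zero, sub_zero, ← hF5] at h1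
        calc tσ ^ 2 = (inner ℝ (σ - ρ) (v - α • σ) : ℝ) := h1.symm
          _ ≤ ‖σ - ρ‖ * ‖v - α • σ‖ := real_inner_le_norm _ _
          _ = ‖ρ - σ‖ * ‖v - α • σ‖ := by rw [norm_sub_rev]
      have hkey2 : ‖v - α • σ‖ ^ 2 = ‖v‖ ^ 2 - tσ ^ 4 / ‖σ‖ ^ 2 := by
        have h1 : ‖v - α • σ‖ ^ 2 =
            ‖v‖ ^ 2 - 2 * (inner ℝ v (α • σ) : ℝ) + ‖α • σ‖ ^ 2 := norm_sub_sq_real _ _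
        have h2 : (inner ℝ v (α • σ) : ℝ) = α * tσ ^ 2 := by
          rw [real_inner_smul_right, hvσ]
        have h3 : ‖α • σ‖ ^ 2 = α ^ 2 * ‖σ‖ ^ 2 := by
          rw [norm_smul]
          rw [mul_pow]
          congr 1
          rw [Real.norm_eq_abs, sq_abs]
        rw [h1, h2, h3, hα]
        field_simp
        ring
      have hvsq : ‖v‖ ^ 2 ≤ Mc * tσ ^ 2 := by
        calc ‖v‖ ^ 2 ≤ (tσ * Real.sqrt Mc) ^ 2 := by
              have := hvnorm
              nlinarith [norm_nonneg v]
          _ = Mc * tσ ^ 2 := by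
              rw [mul_pow, Real.sq_sqrt hMc.le]
              ring
      -- combine
      have hq1 : tσ ^ 4 ≤ ‖ρ - σ‖ ^ 2 * (Mc * tσ ^ 2 - tσ ^ 4 / ‖σ‖ ^ 2) := by
        have h1 : (tσ ^ 2) ^ 2 ≤ (‖ρ - σ‖ * ‖v - α • σ‖) ^ 2 := by
          have hnn : (0:ℝ) ≤ tσ ^ 2 := by positivity
          nlinarith [hkey1]
        calc tσ ^ 4 = (tσ ^ 2) ^ 2 := by ring
          _ ≤ (‖ρ - σ‖ * ‖v - α • σ‖) ^ 2 := h1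
          _ = ‖ρ - σ‖ ^ 2 * ‖v - α • σ‖ ^ 2 := by ring
          _ = ‖ρ - σ‖ ^ 2 * (‖v‖ ^ 2 - tσ ^ 4 / ‖σ‖ ^ 2) := by rw [hkey2]
          _ ≤ ‖ρ - σ‖ ^ 2 * (Mc * tσ ^ 2 - tσ ^ 4 / ‖σ‖ ^ 2) := by
              refine mul_le_mul_of_nonneg_left ?_ (by positivity)
              linarith [hvsq]
      have hσsq : (0:ℝ) < ‖σ‖ ^ 2 := by positivity
      have hq2 : tσ ^ 4 * ‖σ‖ ^ 2 ≤ ‖ρ - σ‖ ^ 2 * (Mc * tσ ^ 2 * ‖σ‖ ^ 2 - tσ ^ 4) := by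
        have h := mul_le_mul_of_nonneg_right hq1 hσsq.le
        calc tσ ^ 4 * ‖σ‖ ^ 2
            ≤ ‖ρ - σ‖ ^ 2 * (Mc * tσ ^ 2 - tσ ^ 4 / ‖σ‖ ^ 2) * ‖σ‖ ^ 2 := h
          _ = ‖ρ - σ‖ ^ 2 * (Mc * tσ ^ 2 * ‖σ‖ ^ 2 - tσ ^ 4 / ‖σ‖ ^ 2 * ‖σ‖ ^ 2) := by ring
          _ = ‖ρ - σ‖ ^ 2 * (Mc * tσ ^ 2 * ‖σ‖ ^ 2 - tσ ^ 4) := by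
              rw [div_mul_cancel₀ _ hσsq.ne']
      have htσsq : (0:ℝ) < tσ ^ 2 := by positivity
      have hq3 : tσ ^ 2 * (‖σ‖ ^ 2 + ‖ρ - σ‖ ^ 2) ≤ Mc * ‖ρ - σ‖ ^ 2 * ‖σ‖ ^ 2 := by
        have h1 : tσ ^ 2 * (tσ ^ 2 * ‖σ‖ ^ 2) ≤
            tσ ^ 2 * (‖ρ - σ‖ ^ 2 * (Mc * ‖σ‖ ^ 2 - tσ ^ 2)) := by
          calc tσ ^ 2 * (tσ ^ 2 * ‖σ‖ ^ 2) = tσ ^ 4 * ‖σ‖ ^ 2 := by ring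
            _ ≤ ‖ρ - σ‖ ^ 2 * (Mc * tσ ^ 2 * ‖σ‖ ^ 2 - tσ ^ 4) := hq2
            _ = tσ ^ 2 * (‖ρ - σ‖ ^ 2 * (Mc * ‖σ‖ ^ 2 - tσ ^ 2)) := by ring
        have h2 := le_of_mul_le_mul_left h1 htσsq
        nlinarith [h2]
      have hq4 : mc * γδ ^ 2 * ‖σ‖ ^ 2 ≤ tσ ^ 2 := by
        have h := mul_le_mul htσlow htσlow (by positivity) (le_trans (by positivity) htσlow)
        calc mc * γδ ^ 2 * ‖σ‖ ^ 2 = (γδ * Real.sqrt mc * ‖σ‖) * (γδ * Real.sqrt mc * ‖σ‖) := by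
              have : Real.sqrt mc * Real.sqrt mc = mc := Real.mul_self_sqrt hmc.le
              nlinarith [this]
          _ ≤ tσ * tσ := h
          _ = tσ ^ 2 := by ring
      have hq5 : mc * γδ ^ 2 * ‖ρ‖ ^ 2 ≤ Mc * ‖ρ - σ‖ ^ 2 := by
        have h1 : mc * γδ ^ 2 * ‖σ‖ ^ 2 * (‖σ‖ ^ 2 + ‖ρ - σ‖ ^ 2) ≤
            Mc * ‖ρ - σ‖ ^ 2 * ‖σ‖ ^ 2 := by
          calc mc * γδ ^ 2 * ‖σ‖ ^ 2 * (‖σ‖ ^ 2 + ‖ρ - σ‖ ^ 2)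
              ≤ tσ ^ 2 * (‖σ‖ ^ 2 + ‖ρ - σ‖ ^ 2) :=
                mul_le_mul_of_nonneg_right hq4 (by positivity)
            _ ≤ Mc * ‖ρ - σ‖ ^ 2 * ‖σ‖ ^ 2 := hq3
        have h2 : mc * γδ ^ 2 * (‖σ‖ ^ 2 + ‖ρ - σ‖ ^ 2) * ‖σ‖ ^ 2 ≤
            Mc * ‖ρ - σ‖ ^ 2 * ‖σ‖ ^ 2 := by nlinarith [h1]
        have h3 := le_of_mul_le_mul_right h2 hσsq
        rw [hpyth]
        linarith [h3]
      -- conclude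
      have hsq : ‖ρ‖ ^ 2 ≤ (C₁ * ‖ρ - σ‖) ^ 2 := by
        have hC₁sq : (C₁ * ‖ρ - σ‖) ^ 2 = Mc / (mc * γδ ^ 2) * ‖ρ - σ‖ ^ 2 := by
          rw [mul_pow, hC₁, div_pow, mul_pow, Real.sq_sqrt hMc.le, Real.sq_sqrt hmc.le]
          ring
        rw [hC₁sq, div_mul_eq_mul_div, le_div_iff₀ (by positivity : (0:ℝ) < mc * γδ ^ 2)]
        calc ‖ρ‖ ^ 2 * (mc * γδ ^ 2) = mc * γδ ^ 2 * ‖ρ‖ ^ 2 := by ring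
          _ ≤ Mc * ‖ρ - σ‖ ^ 2 := hq5
      have h1 := Real.sqrt_le_sqrt hsq
      rwa [Real.sqrt_sq (norm_nonneg _), Real.sqrt_sq (by positivity)] at h1
  -- per-element error bound in the dual norm
  have hw1 : ∀ w ∈ Xδ, ‖G (G.symm f - uδ)‖ ≤ C₁ * ‖G (G.symm f - w)‖ := by
    intro w hw
    have e1 : G (G.symm f - uδ) = f - G uδ := by rw [map_sub, hfu]
    have e2 : G (G.symm f - w) = f - G w := by rw [map_sub, hfu]
    rw [e1, e2]
    have hmem : ρ - τ (f - G w) ∈ S' := by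
      have h1 : ρ - τ (f - G w) = Tℓ (w - uδ) := by
        rw [hρ, ← hτsub, hTapp]
        congr 1
        rw [map_sub]
        abel
      rw [h1]
      exact Submodule.mem_map_of_mem (Xδ.sub_mem hw huδ)
    have hbddS : BddBelow (Set.range fun w' : (S' : Set Y) => ‖ρ - ↑w'‖) := by
      refine ⟨0, ?_⟩
      rintro _ ⟨w', rfl⟩
      exact norm_nonneg _
    have hD : ‖ρ - σ‖ ≤ ‖f - G w‖ := by
      have h2 := hσmin ▸ ciInf_le hbddS (⟨ρ - τ (f - G w), hmem⟩ : (S' : Set Y))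
      calc ‖ρ - σ‖ ≤ ‖ρ - (ρ - τ (f - G w))‖ := h2
        _ = ‖τ (f - G w)‖ := by rw [sub_sub_cancel]
        _ = ‖f - G w‖ := hτnorm _
    calc ‖f - G uδ‖ = ‖ρ‖ := (hτnorm _).symm
      _ ≤ C₁ * ‖ρ - σ‖ := hρbound
      _ ≤ C₁ * ‖f - G w‖ := mul_le_mul_of_nonneg_left hD hC₁pos.le
  constructor
  · rw [Real.mul_iInf_of_nonneg hC₁pos.le]
    exact le_ciInf fun w => hw1 (w : X) w.2
  · set C₂ : ℝ := Real.sqrt (Mc / mc) * (‖Gc‖ * ‖Gs‖ / γδ) with hC₂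
    have hC₂nn : 0 ≤ C₂ := by positivity
    have hC₂eq : C₂ = ‖Gs‖ * C₁ * ‖Gc‖ := by
      rw [hC₂, hC₁, Real.sqrt_div hMc.le]
      field_simp
    have hw2 : ∀ w ∈ Xδ, ‖G.symm f - uδ‖ ≤ C₂ * ‖G.symm f - w‖ := by
      intro w hw
      have hs1 : ‖G.symm f - uδ‖ ≤ ‖Gs‖ * ‖G (G.symm f - uδ)‖ := by
        have h := Gs.le_opNorm (G (G.symm f - uδ))
        have hz' : Gs (G (G.symm f - uδ)) = G.symm f - uδ := by
          rw [hGs]; exact G.symm_apply_apply _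
        rwa [hz'] at h
      have hs2 : ‖G (G.symm f - w)‖ ≤ ‖Gc‖ * ‖G.symm f - w‖ := by
        have h := Gc.le_opNorm (G.symm f - w)
        have hz' : Gc (G.symm f - w) = G (G.symm f - w) := by rw [hGc]; rfl
        rwa [hz'] at h
      calc ‖G.symm f - uδ‖ ≤ ‖Gs‖ * ‖G (G.symm f - uδ)‖ := hs1
        _ ≤ ‖Gs‖ * (C₁ * ‖G (G.symm f - w)‖) :=
            mul_le_mul_of_nonneg_left (hw1 w hw) (ContinuousLinearMap.opNorm_nonneg _)
        _ ≤ ‖Gs‖ * (C₁ * (‖Gc‖ * ‖G.symm f - w‖)) := by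
            refine mul_le_mul_of_nonneg_left ?_ (ContinuousLinearMap.opNorm_nonneg _)
            exact mul_le_mul_of_nonneg_left hs2 hC₁pos.le
        _ = (‖Gs‖ * C₁ * ‖Gc‖) * ‖G.symm f - w‖ := by ring
        _ = C₂ * ‖G.symm f - w‖ := by rw [hC₂eq]
    rw [Real.mul_iInf_of_nonneg hC₂nn]
    exact le_ciInf fun w => hw2 (w : X) w.2
end

section
/- Let X be a real normed space, Y a real Hilbert space, G : X → Y' a bounded linear map, and let X^δ ⊆ X and Y^δ ⊆ Y be linear subspaces such that G(X^δ) ≠ {0} and Y^δ ≠ {0}. Suppose Π : Y → Y is a bounded linear map with range contained in Y^δ and such that (Gz)(y − Πy) = 0 for all z ∈ X^δ and all y ∈ Y (a Fortin interpolator). Then for every z ∈ X^δ, ‖Gz‖_{(Y^δ)'} ≥ ‖Π‖_{L(Y,Y)}^{-1} · ‖Gz‖_{Y'}; that is, the inf-sup constant γ^δ := inf{ ‖Gz‖_{(Y^δ)'}/‖Gz‖_{Y'} : z ∈ X^δ, Gz ≠ 0 } satisfies γ^δ ≥ ‖Π‖_{L(Y,Y)}^{-1}. -/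
/-- Let `X` be a real normed space, `Y` a real Hilbert space,
`G : X → Y'` bounded linear, `Xδ ⊆ X`, `Yδ ⊆ Y` subspaces with `G(Xδ) ≠ {0}` and
`Yδ ≠ {0}`. If `P : Y → Y` is a bounded linear map with range in `Yδ` such that
`(Gz)(y − Py) = 0` for all `z ∈ Xδ`, `y ∈ Y` (a Fortin interpolator), then for every
`z ∈ Xδ`, `‖Gz‖_{(Yδ)'} ≥ ‖P‖⁻¹ ‖Gz‖_{Y'}`; that is, the inf-sup constant `γδ`
satisfies `γδ ≥ ‖P‖⁻¹`. -/
theorem stmt11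
    {X Y : Type*}
    [NormedAddCommGroup X] [NormedSpace ℝ X]
    [NormedAddCommGroup Y] [InnerProductSpace ℝ Y] [CompleteSpace Y]
    (G : X →L[ℝ] (Y →L[ℝ] ℝ))
    (Xδ : Submodule ℝ X) (Yδ : Submodule ℝ Y)
    (hGXδ : ∃ z ∈ Xδ, G z ≠ 0) (hYδ : Yδ ≠ ⊥)
    (P : Y →L[ℝ] Y)
    (hPrange : ∀ y : Y, P y ∈ Yδ)
    (hFortin : ∀ z ∈ Xδ, ∀ y : Y, G z (y - P y) = 0) :
    (∀ z ∈ Xδ, ‖P‖⁻¹ * ‖G z‖ ≤ ⨆ y : Yδ, |G z (y : Y)| / ‖(y : Y)‖) ∧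
    ‖P‖⁻¹ ≤ ⨅ z : {z : X // z ∈ Xδ ∧ G z ≠ 0},
        (⨆ y : Yδ, |G (z : X) (y : Y)| / ‖(y : Y)‖) / ‖G (z : X)‖ := by
  have hS_bdd : ∀ z : X, BddAbove (Set.range fun y : Yδ => |G z (y : Y)| / ‖(y : Y)‖) := by
    intro z
    refine ⟨‖G z‖, ?_⟩
    rintro _ ⟨y, rfl⟩
    rcases eq_or_ne ‖(y : Y)‖ 0 with h | h
    · simp [h]
    · rw [div_le_iff₀ (lt_of_le_of_ne (norm_nonneg _) (Ne.symm h))]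
      exact (G z).le_opNorm _
  have hS_nonneg : ∀ z : X, 0 ≤ ⨆ y : Yδ, |G z (y : Y)| / ‖(y : Y)‖ := by
    intro z
    have h := le_ciSup (hS_bdd z) (⟨0, Yδ.zero_mem⟩ : Yδ)
    simpa using h
  have key : ∀ z ∈ Xδ, ‖G z‖ ≤ ‖P‖ * ⨆ y : Yδ, |G z (y : Y)| / ‖(y : Y)‖ := by
    intro z hz
    set S := ⨆ y : Yδ, |G z (y : Y)| / ‖(y : Y)‖ with hS
    refine (G z).opNorm_le_bound (mul_nonneg (norm_nonneg _) (hS_nonneg z)) fun y => ?_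
    have h1 : G z y = G z (P y) := by
      have h := hFortin z hz y
      rw [map_sub] at h
      linarith
    have h2 : |G z (P y)| ≤ S * ‖P y‖ := by
      rcases eq_or_ne ‖P y‖ 0 with h0 | h0
      · rw [norm_eq_zero] at h0
        simp [h0]
      · have hpos : (0 : ℝ) < ‖P y‖ := lt_of_le_of_ne (norm_nonneg _) (Ne.symm h0)
        have hle := le_ciSup (hS_bdd z) (⟨P y, hPrange y⟩ : Yδ)
        rw [← hS] at hle
        calc |G z (P y)| = (|G z (P y)| / ‖P y‖) * ‖P y‖ := by field_simp
          _ ≤ S * ‖P y‖ := mul_le_mul_of_nonneg_right hle hpos.le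
    calc ‖G z y‖ = |G z (P y)| := by rw [h1]; rfl
      _ ≤ S * ‖P y‖ := h2
      _ ≤ S * (‖P‖ * ‖y‖) := mul_le_mul_of_nonneg_left (P.le_opNorm y) (hS_nonneg z)
      _ = ‖P‖ * S * ‖y‖ := by ring
  have part1 : ∀ z ∈ Xδ, ‖P‖⁻¹ * ‖G z‖ ≤ ⨆ y : Yδ, |G z (y : Y)| / ‖(y : Y)‖ := by
    intro z hz
    rcases eq_or_ne ‖P‖ 0 with h0 | h0
    · rw [h0, inv_zero, zero_mul]
      exact hS_nonneg z
    · have hpos : (0 : ℝ) < ‖P‖ := lt_of_le_of_ne (norm_nonneg _) (Ne.symm h0)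
      rw [inv_mul_le_iff₀ hpos]
      exact key z hz
  refine ⟨part1, ?_⟩
  obtain ⟨z₀, hz₀, hG₀⟩ := hGXδ
  haveI : Nonempty {z : X // z ∈ Xδ ∧ G z ≠ 0} := ⟨⟨z₀, hz₀, hG₀⟩⟩
  refine le_ciInf fun ⟨z, hz, hGz⟩ => ?_
  have hpos : (0 : ℝ) < ‖G z‖ := norm_pos_iff.mpr hGz
  rw [le_div_iff₀ hpos]
  exact part1 z hz
end

section
/- Let X be a real Hilbert space, let 0 ≤ k ≤ m with m ≥ 1, and let Y_1, …, Y_m be real Hilbert spaces. Let V := Y_1' × ⋯ × Y_k' × Y_{k+1} × ⋯ × Y_m with norm ‖(g_1,…,g_k,y_{k+1},…,y_m)‖_V² := Σ_{i=1}^k ‖g_i‖_{Y_i'}² + Σ_{i=k+1}^m ‖y_i‖_{Y_i}². Let G = (G_1,…,G_m) ∈ Lis(X,V), let f = (f_1,…,f_m) ∈ V, and let u := G⁻¹f. Let X^δ ⊆ X be a linear subspace. For each 1 ≤ i ≤ k, let Y_i^δ ⊆ Y_i be a closed linear subspace, let ⟨·,·⟩_{Y_i^δ} be an inner product on Y_i^δ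 whose norm ‖·‖_{Y_i^δ} satisfies m_i·‖y‖_{Y_i^δ}² ≤ ‖y‖_{Y_i}² ≤ M_i·‖y‖_{Y_i^δ}² for all y ∈ Y_i^δ with constants 0 < m_i ≤ M_i, and let Π_i : Y_i → Y_i be a bounded linear map with range contained in Y_i^δ and (G_i z)(y − Π_i y) = 0 for all z ∈ X^δ and y ∈ Y_i. For w ∈ X^δ define the estimator E(w,f)² := Σ_{i=1}^k sup_{0 ≠ y ∈ Y_i^δ} |(f_i − G_i w)(y)|²/‖y‖_{Y_i^δ}² + Σ_{i=k+1}^m ‖f_i − G_i w‖_{Y_i}². Then for every w ∈ X^δ: ‖G‖_{L(X,V)}^{-2} · min(1, min_{1≤i≤k} M_i^{-1}) · E(w,f)² ≤ ‖u − w‖_X² ≤ ‖G⁻¹‖_{L(V,X)}² · max(1, 2·max_{1≤i≤k} m_i^{-1}‖Π_i‖_{L(Y_i,Y_i)}²) · E(w,f)² + 2‖G⁻¹‖_{L(V,X)}² · Σ_{i=1}^k ‖(Id − Π_i')f_i‖_{Y_i'}², where Π_i' : Y_i' → Y_i' is the adjoint of Π_i, (Π_i' g)(y) := g(Π_i y).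 -/
set_option maxHeartbeats 1000000 in
/-- A posteriori error estimation for the practical MINRES method.
`X` is a real Hilbert space, `0 ≤ k ≤ m`, `m ≥ 1`, and `Y i` (`i : Fin m`) are real
Hilbert spaces. The operator `G = (G₁,…,G_m) ∈ Lis(X,V)`, where
`V = Y₁' × ⋯ × Y_k' × Y_{k+1} × ⋯ × Y_m` carries the Hilbertian product norm, is encoded
componentwise: `Gd i` (`i < k`, dual-valued components) and `Gm i` (`i ≥ k`), together
with constants `CG ≥ ‖G‖` and `CGinv ≥ ‖G⁻¹‖` realized by the two-sided bound
`‖x‖²/CGinv² ≤ Σ_{i<k}‖Gd i x‖² + Σ_{i≥k}‖Gm i x‖² ≤ CG²‖x‖²` (so the stated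
inequalities in particular hold for `CG = ‖G‖`, `CGinv = ‖G⁻¹‖`). The data is
`f = (fd,fm) ∈ V` and `u := G⁻¹f`, i.e. `Gd i u = fd i` (`i < k`), `Gm i u = fm i`
(`i ≥ k`). For `i < k`, `Yd i ⊆ Y i` is a closed subspace carrying a discrete inner
product `ip i` with norm `‖y‖_{Y_i^δ} = √(ip i y y)` satisfying
`mc i · ‖y‖_{Y_i^δ}² ≤ ‖y‖² ≤ Mc i · ‖y‖_{Y_i^δ}²` on `Yd i`, and `P i` is a Fortin
interpolator. Then for every `w ∈ Xδ` the computable estimator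
`E(w,f)² = Σ_{i<k} sup_{0≠y∈Yd i} |(fd i − Gd i w)(y)|²/‖y‖_{Y_i^δ}²
          + Σ_{i≥k} ‖fm i − Gm i w‖²`
satisfies the stated two-sided bound with the oscillation term
`Σ_{i<k} ‖(Id − (P i)')(fd i)‖²`. -/
theorem stmt13
    {X : Type*} [NormedAddCommGroup X] [InnerProductSpace ℝ X] [CompleteSpace X]
    {m k : ℕ} (hm : 0 < m) (hk : k ≤ m)
    (Y : Fin m → Type*) [∀ i, NormedAddCommGroup (Y i)] [∀ i, InnerProductSpace ℝ (Y i)]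
    [∀ i, CompleteSpace (Y i)]
    (Gd : ∀ i : Fin m, X →L[ℝ] (Y i →L[ℝ] ℝ))
    (Gm : ∀ i : Fin m, X →L[ℝ] Y i)
    (CG CGinv : ℝ) (hCG0 : 0 < CG) (hCGinv0 : 0 < CGinv)
    (hCG : ∀ x : X,
      (∑ i ∈ Finset.univ.filter (fun i : Fin m => (i : ℕ) < k), ‖Gd i x‖ ^ 2) +
      (∑ i ∈ Finset.univ.filter (fun i : Fin m => ¬ (i : ℕ) < k), ‖Gm i x‖ ^ 2) ≤
        CG ^ 2 * ‖x‖ ^ 2)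
    (hCGinv : ∀ x : X,
      ‖x‖ ^ 2 ≤ CGinv ^ 2 *
        ((∑ i ∈ Finset.univ.filter (fun i : Fin m => (i : ℕ) < k), ‖Gd i x‖ ^ 2) +
         (∑ i ∈ Finset.univ.filter (fun i : Fin m => ¬ (i : ℕ) < k), ‖Gm i x‖ ^ 2)))
    (hGbij : Function.Bijective fun x : X =>
      ((fun i : {i : Fin m // (i : ℕ) < k} => Gd i x),
       (fun i : {i : Fin m // ¬ (i : ℕ) < k} => Gm i x)))
    (fd : ∀ i : Fin m, Y i →L[ℝ] ℝ) (fm : ∀ i : Fin m, Y i)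
    (u : X)
    (hud : ∀ i : Fin m, (i : ℕ) < k → Gd i u = fd i)
    (hum : ∀ i : Fin m, ¬ (i : ℕ) < k → Gm i u = fm i)
    (Xδ : Submodule ℝ X)
    (Yd : ∀ i : Fin m, Submodule ℝ (Y i)) (hYd : ∀ i, IsClosed ((Yd i : Set (Y i))))
    (ip : ∀ i : Fin m, Y i → Y i → ℝ)
    (hip_symm : ∀ i, ∀ y z : Y i, y ∈ Yd i → z ∈ Yd i → ip i y z = ip i z y)
    (hip_add : ∀ i, ∀ x y z : Y i, x ∈ Yd i → y ∈ Yd i → z ∈ Yd i →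
        ip i (x + y) z = ip i x z + ip i y z)
    (hip_smul : ∀ i, ∀ (c : ℝ) (y z : Y i), y ∈ Yd i → z ∈ Yd i →
        ip i (c • y) z = c * ip i y z)
    (hip_pos : ∀ i : Fin m, (i : ℕ) < k → ∀ y ∈ Yd i, y ≠ 0 → 0 < ip i y y)
    (mc Mc : Fin m → ℝ)
    (hmc : ∀ i : Fin m, (i : ℕ) < k → 0 < mc i)
    (hmM : ∀ i : Fin m, (i : ℕ) < k → mc i ≤ Mc i)
    (hequiv : ∀ i : Fin m, (i : ℕ) < k → ∀ y ∈ Yd i,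
        mc i * ip i y y ≤ ‖y‖ ^ 2 ∧ ‖y‖ ^ 2 ≤ Mc i * ip i y y)
    (P : ∀ i : Fin m, Y i →L[ℝ] Y i)
    (hPrange : ∀ i : Fin m, (i : ℕ) < k → ∀ y : Y i, P i y ∈ Yd i)
    (hFortin : ∀ i : Fin m, (i : ℕ) < k → ∀ z ∈ Xδ, ∀ y : Y i, Gd i z (y - P i y) = 0) :
    ∀ w ∈ Xδ,
      (CG⁻¹ ^ 2 *
          sInf (insert (1 : ℝ) ((fun i : Fin m => (Mc i)⁻¹) '' {i : Fin m | (i : ℕ) < k})) *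
          ((∑ i ∈ Finset.univ.filter (fun i : Fin m => (i : ℕ) < k),
              (⨆ y : Yd i,
                |(fd i - Gd i w) (y : Y i)| / Real.sqrt (ip i (y : Y i) (y : Y i))) ^ 2) +
           (∑ i ∈ Finset.univ.filter (fun i : Fin m => ¬ (i : ℕ) < k),
              ‖fm i - Gm i w‖ ^ 2)) ≤
        ‖u - w‖ ^ 2) ∧
      (‖u - w‖ ^ 2 ≤
        CGinv ^ 2 *
          sSup (insert (1 : ℝ)
            ((fun i : Fin m => 2 * (mc i)⁻¹ * ‖P i‖ ^ 2) '' {i : Fin m | (i : ℕ) < k})) *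
          ((∑ i ∈ Finset.univ.filter (fun i : Fin m => (i : ℕ) < k),
              (⨆ y : Yd i,
                |(fd i - Gd i w) (y : Y i)| / Real.sqrt (ip i (y : Y i) (y : Y i))) ^ 2) +
           (∑ i ∈ Finset.univ.filter (fun i : Fin m => ¬ (i : ℕ) < k),
              ‖fm i - Gm i w‖ ^ 2)) +
        2 * CGinv ^ 2 *
          ∑ i ∈ Finset.univ.filter (fun i : Fin m => (i : ℕ) < k),
            ‖(fd i).comp (ContinuousLinearMap.id ℝ (Y i) - P i)‖ ^ 2) := by
  intro w hw
  classical
  -- discrete inner product facts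
  have hip0 : ∀ i : Fin m, ip i 0 0 = 0 := by
    intro i
    have h := hip_smul i 0 0 0 (Yd i).zero_mem (Yd i).zero_mem
    simpa using h
  have hMc0 : ∀ i : Fin m, (i : ℕ) < k → 0 < Mc i :=
    fun i hi => lt_of_lt_of_le (hmc i hi) (hmM i hi)
  have hnorm_le : ∀ i : Fin m, (i : ℕ) < k → ∀ y ∈ Yd i,
      ‖y‖ ≤ Real.sqrt (Mc i) * Real.sqrt (ip i y y) := by
    intro i hi y hy
    have h := (hequiv i hi y hy).2
    have h2 : ‖y‖ = Real.sqrt (‖y‖ ^ 2) := (Real.sqrt_sq (norm_nonneg y)).symm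
    rw [h2, ← Real.sqrt_mul (hMc0 i hi).le]
    exact Real.sqrt_le_sqrt h
  -- the estimator values S i as suprema
  set S : Fin m → ℝ := fun i => ⨆ y : Yd i,
      |(fd i - Gd i w) (y : Y i)| / Real.sqrt (ip i (y : Y i) (y : Y i)) with hS
  have hub : ∀ i : Fin m, (i : ℕ) < k → ∀ y : Yd i,
      |(fd i - Gd i w) (y : Y i)| / Real.sqrt (ip i (y : Y i) (y : Y i)) ≤
        ‖fd i - Gd i w‖ * Real.sqrt (Mc i) := by
    intro i hi y
    rcases eq_or_ne (y : Y i) 0 with h0 | h0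
    · rw [h0]
      simp only [map_zero, abs_zero, zero_div]
      positivity
    · have hpos := hip_pos i hi _ y.2 h0
      rw [div_le_iff₀ (Real.sqrt_pos.mpr hpos)]
      calc |(fd i - Gd i w) (y : Y i)| ≤ ‖fd i - Gd i w‖ * ‖(y : Y i)‖ := by
            rw [← Real.norm_eq_abs]; exact (fd i - Gd i w).le_opNorm _
        _ ≤ ‖fd i - Gd i w‖ * (Real.sqrt (Mc i) * Real.sqrt (ip i (y : Y i) (y : Y i))) :=
            mul_le_mul_of_nonneg_left (hnorm_le i hi _ y.2) (norm_nonneg _)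
        _ = ‖fd i - Gd i w‖ * Real.sqrt (Mc i) * Real.sqrt (ip i (y : Y i) (y : Y i)) := by
            ring
  have hbdd : ∀ i : Fin m, (i : ℕ) < k → BddAbove (Set.range fun y : Yd i =>
      |(fd i - Gd i w) (y : Y i)| / Real.sqrt (ip i (y : Y i) (y : Y i))) := by
    intro i hi
    exact ⟨‖fd i - Gd i w‖ * Real.sqrt (Mc i), by rintro _ ⟨y, rfl⟩; exact hub i hi y⟩
  have hS0 : ∀ i : Fin m, (i : ℕ) < k → 0 ≤ S i := by
    intro i hi
    have h := le_ciSup (hbdd i hi) (⟨0, (Yd i).zero_mem⟩ : Yd i)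
    rw [hS]
    simpa [hip0 i] using h
  have hSle : ∀ i : Fin m, (i : ℕ) < k → ∀ y ∈ Yd i,
      |(fd i - Gd i w) y| ≤ S i * Real.sqrt (ip i y y) := by
    intro i hi y hy
    rcases eq_or_ne y 0 with rfl | h0
    · simp [hip0 i]
    · have hpos := hip_pos i hi y hy h0
      have h := le_ciSup (hbdd i hi) (⟨y, hy⟩ : Yd i)
      rw [hS]
      exact (div_le_iff₀ (Real.sqrt_pos.mpr hpos)).mp h
  have hSub : ∀ i : Fin m, (i : ℕ) < k → S i ≤ ‖fd i - Gd i w‖ * Real.sqrt (Mc i) := by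
    intro i hi
    haveI : Nonempty (Yd i) := ⟨⟨0, (Yd i).zero_mem⟩⟩
    rw [hS]
    exact ciSup_le (hub i hi)
  -- constants
  have hfinI : (insert (1 : ℝ) ((fun i : Fin m => (Mc i)⁻¹) '' {i : Fin m | (i:ℕ) < k})).Finite :=
    (Set.toFinite _).image _ |>.insert 1
  have hfinS : (insert (1 : ℝ)
      ((fun i : Fin m => 2 * (mc i)⁻¹ * ‖P i‖ ^ 2) '' {i : Fin m | (i:ℕ) < k})).Finite :=
    (Set.toFinite _).image _ |>.insert 1
  set cI : ℝ := sInf (insert (1 : ℝ) ((fun i : Fin m => (Mc i)⁻¹) '' {i : Fin m | (i:ℕ) < k}))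
    with hcI
  set cS : ℝ := sSup (insert (1 : ℝ)
      ((fun i : Fin m => 2 * (mc i)⁻¹ * ‖P i‖ ^ 2) '' {i : Fin m | (i:ℕ) < k})) with hcS
  have hcI1 : cI ≤ 1 := csInf_le hfinI.bddBelow (Set.mem_insert _ _)
  have hcIle : ∀ i : Fin m, (i : ℕ) < k → cI ≤ (Mc i)⁻¹ := fun i hi =>
    csInf_le hfinI.bddBelow (Set.mem_insert_of_mem _ ⟨i, hi, rfl⟩)
  have hcS1 : (1 : ℝ) ≤ cS := le_csSup hfinS.bddAbove (Set.mem_insert _ _)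
  have hcSge : ∀ i : Fin m, (i : ℕ) < k → 2 * (mc i)⁻¹ * ‖P i‖ ^ 2 ≤ cS := fun i hi =>
    le_csSup hfinS.bddAbove (Set.mem_insert_of_mem _ ⟨i, hi, rfl⟩)
  -- residual identities
  have hFd : ∀ i : Fin m, (i : ℕ) < k → Gd i (u - w) = fd i - Gd i w := by
    intro i hi; rw [map_sub, hud i hi]
  have hFm : ∀ i : Fin m, ¬ (i : ℕ) < k → Gm i (u - w) = fm i - Gm i w := by
    intro i hi; rw [map_sub, hum i hi]
  constructor
  · -- lower bound
    have hA : ∀ i ∈ Finset.univ.filter (fun i : Fin m => (i : ℕ) < k),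
        cI * S i ^ 2 ≤ ‖Gd i (u - w)‖ ^ 2 := by
      intro i hiD
      have hi : (i : ℕ) < k := (Finset.mem_filter.mp hiD).2
      have h1 : S i ^ 2 ≤ Mc i * ‖fd i - Gd i w‖ ^ 2 := by
        have h := hSub i hi
        nlinarith [hS0 i hi, Real.sq_sqrt (hMc0 i hi).le, Real.sqrt_nonneg (Mc i),
          norm_nonneg (fd i - Gd i w)]
      have h2 : cI * S i ^ 2 ≤ (Mc i)⁻¹ * S i ^ 2 :=
        mul_le_mul_of_nonneg_right (hcIle i hi) (sq_nonneg _)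
      have h3 : (Mc i)⁻¹ * S i ^ 2 ≤ ‖fd i - Gd i w‖ ^ 2 := by
        rw [inv_mul_le_iff₀ (hMc0 i hi)]
        exact h1
      rw [hFd i hi]
      exact h2.trans h3
    have hB : ∀ i ∈ Finset.univ.filter (fun i : Fin m => ¬ (i : ℕ) < k),
        cI * ‖fm i - Gm i w‖ ^ 2 ≤ ‖Gm i (u - w)‖ ^ 2 := by
      intro i hiD
      have hi : ¬ (i : ℕ) < k := (Finset.mem_filter.mp hiD).2
      rw [hFm i hi]
      nlinarith [sq_nonneg ‖fm i - Gm i w‖]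
    have hlow : cI * ((∑ i ∈ Finset.univ.filter (fun i : Fin m => (i : ℕ) < k), S i ^ 2) +
        (∑ i ∈ Finset.univ.filter (fun i : Fin m => ¬ (i : ℕ) < k), ‖fm i - Gm i w‖ ^ 2)) ≤
        CG ^ 2 * ‖u - w‖ ^ 2 := by
      calc cI * (_ + _)
          = (∑ i ∈ Finset.univ.filter (fun i : Fin m => (i : ℕ) < k), cI * S i ^ 2) +
            (∑ i ∈ Finset.univ.filter (fun i : Fin m => ¬ (i : ℕ) < k),
              cI * ‖fm i - Gm i w‖ ^ 2) := by
            rw [mul_add, Finset.mul_sum, Finset.mul_sum]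
        _ ≤ (∑ i ∈ Finset.univ.filter (fun i : Fin m => (i : ℕ) < k), ‖Gd i (u - w)‖ ^ 2) +
            (∑ i ∈ Finset.univ.filter (fun i : Fin m => ¬ (i : ℕ) < k), ‖Gm i (u - w)‖ ^ 2) :=
            add_le_add (Finset.sum_le_sum hA) (Finset.sum_le_sum hB)
        _ ≤ CG ^ 2 * ‖u - w‖ ^ 2 := hCG (u - w)
    calc CG⁻¹ ^ 2 * cI * (_ + _) = CG⁻¹ ^ 2 * (cI * (_ + _)) := mul_assoc _ _ _
      _ ≤ CG⁻¹ ^ 2 * (CG ^ 2 * ‖u - w‖ ^ 2) :=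
          mul_le_mul_of_nonneg_left hlow (by positivity)
      _ = ‖u - w‖ ^ 2 := by
          field_simp
  · -- upper bound
    have hmc0' : ∀ i : Fin m, (i : ℕ) < k → (0:ℝ) ≤ (mc i)⁻¹ := fun i hi =>
      (inv_pos.mpr (hmc i hi)).le
    have hosc : ∀ i : Fin m, (i : ℕ) < k →
        ‖fd i - Gd i w‖ ≤ Real.sqrt ((mc i)⁻¹) * ‖P i‖ * S i +
          ‖(fd i).comp (ContinuousLinearMap.id ℝ (Y i) - P i)‖ := by
      intro i hi
      have hSnn := hS0 i hi
      apply ContinuousLinearMap.opNorm_le_bound _ (by positivity)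
      intro y
      have hF0 : (Gd i w) (y - P i y) = 0 := hFortin i hi w hw y
      have hsplit : (fd i - Gd i w) y =
          (fd i - Gd i w) (P i y) + (fd i) (y - P i y) := by
        have h1 : (fd i - Gd i w) y =
            (fd i - Gd i w) (P i y) + (fd i - Gd i w) (y - P i y) := by
          rw [← map_add]
          congr 1
          abel
        rw [h1]
        congr 1
        simp [hF0]
      have hipPy : Real.sqrt (ip i (P i y) (P i y)) ≤ Real.sqrt ((mc i)⁻¹) * ‖P i y‖ := by
        have h := (hequiv i hi (P i y) (hPrange i hi y)).1
        have h2 : ip i (P i y) (P i y) ≤ (mc i)⁻¹ * ‖P i y‖ ^ 2 := by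
          have h3 := mul_le_mul_of_nonneg_left h (hmc0' i hi)
          rwa [← mul_assoc, inv_mul_cancel₀ (hmc i hi).ne', one_mul] at h3
        calc Real.sqrt (ip i (P i y) (P i y)) ≤ Real.sqrt ((mc i)⁻¹ * ‖P i y‖ ^ 2) :=
              Real.sqrt_le_sqrt h2
          _ = Real.sqrt ((mc i)⁻¹) * ‖P i y‖ := by
              rw [Real.sqrt_mul (hmc0' i hi), Real.sqrt_sq (norm_nonneg _)]
      have h1 : |(fd i - Gd i w) (P i y)| ≤ S i * (Real.sqrt ((mc i)⁻¹) * (‖P i‖ * ‖y‖)) := by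
        calc |(fd i - Gd i w) (P i y)| ≤ S i * Real.sqrt (ip i (P i y) (P i y)) :=
              hSle i hi _ (hPrange i hi y)
          _ ≤ S i * (Real.sqrt ((mc i)⁻¹) * ‖P i y‖) := by
              apply mul_le_mul_of_nonneg_left _ (hS0 i hi)
              exact hipPy
          _ ≤ S i * (Real.sqrt ((mc i)⁻¹) * (‖P i‖ * ‖y‖)) := by
              apply mul_le_mul_of_nonneg_left _ (hS0 i hi)
              exact mul_le_mul_of_nonneg_left ((P i).le_opNorm y) (Real.sqrt_nonneg _)
      have h2 : |(fd i) (y - P i y)| ≤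
          ‖(fd i).comp (ContinuousLinearMap.id ℝ (Y i) - P i)‖ * ‖y‖ := by
        have he : ((fd i).comp (ContinuousLinearMap.id ℝ (Y i) - P i)) y =
            (fd i) (y - P i y) := by simp
        rw [← he, ← Real.norm_eq_abs]
        exact ((fd i).comp (ContinuousLinearMap.id ℝ (Y i) - P i)).le_opNorm y
      rw [Real.norm_eq_abs, hsplit]
      calc |(fd i - Gd i w) (P i y) + (fd i) (y - P i y)| ≤
            |(fd i - Gd i w) (P i y)| + |(fd i) (y - P i y)| := abs_add_le _ _
        _ ≤ S i * (Real.sqrt ((mc i)⁻¹) * (‖P i‖ * ‖y‖)) +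
            ‖(fd i).comp (ContinuousLinearMap.id ℝ (Y i) - P i)‖ * ‖y‖ := add_le_add h1 h2
        _ = (Real.sqrt ((mc i)⁻¹) * ‖P i‖ * S i +
            ‖(fd i).comp (ContinuousLinearMap.id ℝ (Y i) - P i)‖) * ‖y‖ := by ring
    have hAu : ∀ i ∈ Finset.univ.filter (fun i : Fin m => (i : ℕ) < k),
        ‖Gd i (u - w)‖ ^ 2 ≤ cS * S i ^ 2 +
          2 * ‖(fd i).comp (ContinuousLinearMap.id ℝ (Y i) - P i)‖ ^ 2 := by
      intro i hiD
      have hi : (i : ℕ) < k := (Finset.mem_filter.mp hiD).2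
      rw [hFd i hi]
      have h := hosc i hi
      have hsq : Real.sqrt ((mc i)⁻¹) ^ 2 = (mc i)⁻¹ := Real.sq_sqrt (hmc0' i hi)
      have hge := hcSge i hi
      set a := Real.sqrt ((mc i)⁻¹) * ‖P i‖ * S i with ha
      set b := ‖(fd i).comp (ContinuousLinearMap.id ℝ (Y i) - P i)‖ with hb
      have ha0 : 0 ≤ a :=
        mul_nonneg (mul_nonneg (Real.sqrt_nonneg _) (norm_nonneg _)) (hS0 i hi)
      have hb0 : 0 ≤ b := norm_nonneg _
      have hF2 : ‖fd i - Gd i w‖ ^ 2 ≤ (a + b) ^ 2 := by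
        nlinarith [norm_nonneg (fd i - Gd i w)]
      have hab : (a + b) ^ 2 ≤ 2 * a ^ 2 + 2 * b ^ 2 := by nlinarith [sq_nonneg (a - b)]
      have ha2 : a ^ 2 = (mc i)⁻¹ * (‖P i‖ ^ 2 * S i ^ 2) := by
        have h1 : a ^ 2 = Real.sqrt ((mc i)⁻¹) ^ 2 * (‖P i‖ ^ 2 * S i ^ 2) := by
          rw [ha]; ring
        rw [h1, hsq]
      have h2a : 2 * a ^ 2 ≤ cS * S i ^ 2 := by
        have := mul_le_mul_of_nonneg_right hge (sq_nonneg (S i))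
        rw [ha2]; nlinarith
      linarith
    have hBu : ∀ i ∈ Finset.univ.filter (fun i : Fin m => ¬ (i : ℕ) < k),
        ‖Gm i (u - w)‖ ^ 2 ≤ cS * ‖fm i - Gm i w‖ ^ 2 := by
      intro i hiD
      have hi : ¬ (i : ℕ) < k := (Finset.mem_filter.mp hiD).2
      rw [hFm i hi]
      nlinarith [sq_nonneg ‖fm i - Gm i w‖]
    have hsum : (∑ i ∈ Finset.univ.filter (fun i : Fin m => (i : ℕ) < k), ‖Gd i (u - w)‖ ^ 2) +
        (∑ i ∈ Finset.univ.filter (fun i : Fin m => ¬ (i : ℕ) < k), ‖Gm i (u - w)‖ ^ 2) ≤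
        cS * ((∑ i ∈ Finset.univ.filter (fun i : Fin m => (i : ℕ) < k), S i ^ 2) +
          (∑ i ∈ Finset.univ.filter (fun i : Fin m => ¬ (i : ℕ) < k), ‖fm i - Gm i w‖ ^ 2)) +
        2 * ∑ i ∈ Finset.univ.filter (fun i : Fin m => (i : ℕ) < k),
          ‖(fd i).comp (ContinuousLinearMap.id ℝ (Y i) - P i)‖ ^ 2 := by
      have h1 := Finset.sum_le_sum hAu
      have h2 := Finset.sum_le_sum hBu
      rw [Finset.sum_add_distrib, ← Finset.mul_sum, ← Finset.mul_sum] at h1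
      rw [← Finset.mul_sum] at h2
      rw [mul_add]
      linarith
    calc ‖u - w‖ ^ 2 ≤ CGinv ^ 2 *
        ((∑ i ∈ Finset.univ.filter (fun i : Fin m => (i : ℕ) < k), ‖Gd i (u - w)‖ ^ 2) +
         (∑ i ∈ Finset.univ.filter (fun i : Fin m => ¬ (i : ℕ) < k), ‖Gm i (u - w)‖ ^ 2)) :=
          hCGinv (u - w)
      _ ≤ CGinv ^ 2 *
          (cS * ((∑ i ∈ Finset.univ.filter (fun i : Fin m => (i : ℕ) < k), S i ^ 2) +
            (∑ i ∈ Finset.univ.filter (fun i : Fin m => ¬ (i : ℕ) < k), ‖fm i - Gm i w‖ ^ 2)) +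
          2 * ∑ i ∈ Finset.univ.filter (fun i : Fin m => (i : ℕ) < k),
            ‖(fd i).comp (ContinuousLinearMap.id ℝ (Y i) - P i)‖ ^ 2) :=
          mul_le_mul_of_nonneg_left hsum (by positivity)
      _ = CGinv ^ 2 * cS *
          ((∑ i ∈ Finset.univ.filter (fun i : Fin m => (i : ℕ) < k), S i ^ 2) +
           (∑ i ∈ Finset.univ.filter (fun i : Fin m => ¬ (i : ℕ) < k), ‖fm i - Gm i w‖ ^ 2)) +
          2 * CGinv ^ 2 *
            ∑ i ∈ Finset.univ.filter (fun i : Fin m => (i : ℕ) < k),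
              ‖(fd i).comp (ContinuousLinearMap.id ℝ (Y i) - P i)‖ ^ 2 := by ring
end

section
/- Let X be a real normed space, Y a real Hilbert space, G_i : X → Y' a bounded linear map, X^δ ⊆ X and Y^δ ⊆ Y linear subspaces, u ∈ X, and set f_i := G_i u ∈ Y'. Suppose Π : Y → Y is a bounded linear map with range contained in Y^δ and (G_i z)(y − Πy) = 0 for all z ∈ X^δ and y ∈ Y. Then ‖(Id − Π')f_i‖_{Y'} ≤ ‖Id − Π‖_{L(Y,Y)} · ‖G_i‖_{L(X,Y')} · inf_{w ∈ X^δ} ‖u − w‖_X, where Π' : Y' → Y' is the adjoint of Π, (Π' g)(y) := g(Πy). (In particular, applying this with a projector Π onto Y^δ satisfying ‖Id − Π‖ = 1/γ_i^δ, the data-oscillation term ‖(Id − Π')f_i‖_{Y'} is bounded by (1/γ_i^δ)·‖G_i‖_{L(X,Y')} times the best approximation error inf_{w ∈ X^δ} ‖u − w‖_X.) -/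
/-- Let `X` be a real normed space, `Y` a real Hilbert space,
`Gᵢ : X → Y'` bounded linear, `Xδ ⊆ X`, `Yδ ⊆ Y` subspaces, `u ∈ X` and `fᵢ := Gᵢu`.
If `P : Y → Y` is a bounded linear map with range in `Yδ` and `(Gᵢz)(y − Py) = 0` for
all `z ∈ Xδ`, `y ∈ Y`, then
`‖(Id − P')fᵢ‖_{Y'} ≤ ‖Id − P‖ ‖Gᵢ‖ inf_{w ∈ Xδ} ‖u − w‖`, where
`(Id − P')fᵢ = fᵢ ∘ (Id − P)`. -/
theorem stmt14
    {X Y : Type*}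
    [NormedAddCommGroup X] [NormedSpace ℝ X]
    [NormedAddCommGroup Y] [InnerProductSpace ℝ Y] [CompleteSpace Y]
    (Gi : X →L[ℝ] (Y →L[ℝ] ℝ))
    (Xδ : Submodule ℝ X) (Yδ : Submodule ℝ Y)
    (u : X)
    (P : Y →L[ℝ] Y)
    (hPrange : ∀ y : Y, P y ∈ Yδ)
    (hFortin : ∀ z ∈ Xδ, ∀ y : Y, Gi z (y - P y) = 0) :
    ‖(Gi u).comp (ContinuousLinearMap.id ℝ Y - P)‖ ≤
      ‖ContinuousLinearMap.id ℝ Y - P‖ * ‖Gi‖ * ⨅ w : Xδ, ‖u - (w : X)‖ := by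
  rw [Real.mul_iInf_of_nonneg (by positivity)]
  apply le_ciInf
  intro w
  have hkey : (Gi u).comp (ContinuousLinearMap.id ℝ Y - P)
      = (Gi (u - (w : X))).comp (ContinuousLinearMap.id ℝ Y - P) := by
    ext y
    simp only [ContinuousLinearMap.comp_apply, ContinuousLinearMap.sub_apply,
      ContinuousLinearMap.id_apply, map_sub, ContinuousLinearMap.sub_apply]
    have h := hFortin (w : X) w.2 y
    rw [map_sub] at h
    linarith
  rw [hkey]
  calc ‖(Gi (u - (w : X))).comp (ContinuousLinearMap.id ℝ Y - P)‖
      ≤ ‖Gi (u - (w : X))‖ * ‖ContinuousLinearMap.id ℝ Y - P‖ :=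
        ContinuousLinearMap.opNorm_comp_le _ _
    _ ≤ (‖Gi‖ * ‖u - (w : X)‖) * ‖ContinuousLinearMap.id ℝ Y - P‖ :=
        mul_le_mul_of_nonneg_right (Gi.le_opNorm _) (norm_nonneg _)
    _ = ‖ContinuousLinearMap.id ℝ Y - P‖ * ‖Gi‖ * ‖u - (w : X)‖ := by ring
end
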